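/- arXiv:2208.11159 — 5 statements merged into one kernel-verified Lean document; each statement's English description precedes it below -/
import Mathlib

section
/- Let h₋ > 0, U⁻ ∈ C²([−h₋, 0]; ℝ), c ∈ ℝ \ U⁻([−h₋, 0]), and K₀ ≥ 0. For K ≥ 0 let y(K, ·) := y⁻(c, √K, ·) be the unique solution on [−h₋, 0] of −y'' + (K + (U⁻)''/(U⁻ − c)) y = 0 with y(−h₋) = 0, y'(−h₋) = 1, and for each x ∈ [−h₋, 0] let z(x) denote the derivative of K ↦ y(K, x) at K = K₀ (which exists). Then y(K₀, x) > 0 for all x ∈ (−h₋, 0], the function x ↦ z(x)/y(K₀, x) is differentiable on (−h₋, 0] with derivative d/dx ( z(x)/y(K₀, x) ) = y(K₀, x)^{−2} ∫_{−h₋}^{x} y(K₀, s)² ds > 0; in particular x ↦ z(x)/y(K₀, x) is strictly increasing on (−h₋, 0]. -/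
open Set MeasureTheory intervalIntegral Filter Topology
open scoped Interval

lemma ftc_icc {f : ℝ → ℝ} {a b : ℝ} (hab : a < b)
    (hf : ContinuousOn f (Icc a b)) :
    ∀ u ∈ Icc a b, HasDerivWithinAt (fun v => ∫ x in a..v, f x) (f u) (Icc a b) u := by
  intro u hu
  have hint : IntervalIntegrable f volume a u := by
    apply ContinuousOn.intervalIntegrable
    apply hf.mono
    rw [uIcc_of_le hu.1]
    exact Icc_subset_Icc_right hu.2
  have hmeasIcc : AEStronglyMeasurable f (volume.restrict (Icc a b)) :=
    hf.aestronglyMeasurable measurableSet_Icc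
  rcases eq_or_lt_of_le hu.1 with rfl | hau
  · have hmem : Icc a b ∈ 𝓝[Ioi a] a := Icc_mem_nhdsGT hab
    have hmeas : StronglyMeasurableAtFilter f (𝓝[>] a) := ⟨Icc a b, hmem, hmeasIcc⟩
    have hcont : ContinuousWithinAt f (Ioi a) a :=
      (hf a hu).mono_of_mem_nhdsWithin hmem
    exact (integral_hasDerivWithinAt_right hint hmeas hcont).mono Icc_subset_Ici_self
  · have hmemL : Icc a b ∈ 𝓝[Iic u] u := Icc_mem_nhdsLE_of_mem ⟨hau, hu.2⟩
    have hmeasL : StronglyMeasurableAtFilter f (𝓝[≤] u) := ⟨Icc a b, hmemL, hmeasIcc⟩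
    have hcontL : ContinuousWithinAt f (Iic u) u := (hf u hu).mono_of_mem_nhdsWithin hmemL
    have DL : HasDerivWithinAt (fun v => ∫ x in a..v, f x) (f u) (Iic u) u :=
      integral_hasDerivWithinAt_right hint hmeasL hcontL
    rcases eq_or_lt_of_le hu.2 with rfl | hub
    · exact DL.mono Icc_subset_Iic_self
    · have hmemR : Icc a b ∈ 𝓝[Ioi u] u := Icc_mem_nhdsGT_of_mem ⟨hu.1, hub⟩
      have hmeasR : StronglyMeasurableAtFilter f (𝓝[>] u) := ⟨Icc a b, hmemR, hmeasIcc⟩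
      have hcontR : ContinuousWithinAt f (Ioi u) u := (hf u hu).mono_of_mem_nhdsWithin hmemR
      have DR : HasDerivWithinAt (fun v => ∫ x in a..v, f x) (f u) (Ici u) u :=
        integral_hasDerivWithinAt_right hint hmeasR hcontR
      exact (DL.union DR).mono (fun x _ => mem_union _ _ _ |>.mpr (le_total x u))

/-- Monotonicity of `x ↦ (∂_K y⁻ / y⁻)(x)` on `(-h₋, 0]` for the lower
fundamental solution of the Rayleigh equation. -/
theorem monotone_dK_y_over_y
    (hm : ℝ) (hhm : 0 < hm)
    (Um Um' Um'' : ℝ → ℝ)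
    (hUm : ∀ x ∈ Icc (-hm) (0:ℝ), HasDerivAt Um (Um' x) x)
    (hUm' : ∀ x ∈ Icc (-hm) (0:ℝ), HasDerivAt Um' (Um'' x) x)
    (hUmc : ContinuousOn Um'' (Icc (-hm) (0:ℝ)))
    (c : ℝ) (hc : ∀ x ∈ Icc (-hm) (0:ℝ), Um x ≠ c)
    (K₀ : ℝ) (hK₀ : 0 ≤ K₀)
    (y y' y'' : ℝ → ℝ → ℝ)
    (hsol : ∀ K ∈ Ici (0:ℝ),
      (∀ x ∈ Icc (-hm) (0:ℝ),
        HasDerivAt (y K) (y' K x) x ∧ HasDerivAt (y' K) (y'' K x) x ∧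
        -y'' K x + (K + Um'' x / (Um x - c)) * y K x = 0) ∧
      y K (-hm) = 0 ∧ y' K (-hm) = 1)
    (z : ℝ → ℝ)
    (hz : ∀ x ∈ Icc (-hm) (0:ℝ),
      HasDerivWithinAt (fun K => y K x) (z x) (Ici 0) K₀) :
    (∀ x ∈ Ioc (-hm) (0:ℝ), 0 < y K₀ x) ∧
    (∀ x ∈ Ioc (-hm) (0:ℝ),
      HasDerivWithinAt (fun t => z t / y K₀ t)
        ((∫ s in (-hm)..x, y K₀ s ^ 2) / y K₀ x ^ 2) (Icc (-hm) 0) x ∧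
      0 < (∫ s in (-hm)..x, y K₀ s ^ 2) / y K₀ x ^ 2) ∧
    StrictMonoOn (fun t => z t / y K₀ t) (Ioc (-hm) 0) := by
  have ha0 : -hm < 0 := neg_lt_zero.mpr hhm
  set q : ℝ → ℝ := fun x => Um'' x / (Um x - c) with hq_def
  have hsub : ∀ x ∈ Icc (-hm) (0:ℝ), Um x - c ≠ 0 := fun x hx => sub_ne_zero.mpr (hc x hx)
  -- y data at K₀
  have hK₀' : K₀ ∈ Ici (0:ℝ) := hK₀
  set p : ℝ → ℝ := fun x => y K₀ x with hp_def
  have hyd : ∀ K ∈ Ici (0:ℝ), ∀ x ∈ Icc (-hm) (0:ℝ), HasDerivAt (y K) (y' K x) x :=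
    fun K hK x hx => ((hsol K hK).1 x hx).1
  have hy'd : ∀ K ∈ Ici (0:ℝ), ∀ x ∈ Icc (-hm) (0:ℝ), HasDerivAt (y' K) (y'' K x) x :=
    fun K hK x hx => ((hsol K hK).1 x hx).2.1
  have hode : ∀ K ∈ Ici (0:ℝ), ∀ x ∈ Icc (-hm) (0:ℝ), y'' K x = (K + q x) * y K x := by
    intro K hK x hx
    have := ((hsol K hK).1 x hx).2.2
    simp only [hq_def]
    linarith
  have hy0 : ∀ K ∈ Ici (0:ℝ), y K (-hm) = 0 := fun K hK => (hsol K hK).2.1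
  have hy'0 : ∀ K ∈ Ici (0:ℝ), y' K (-hm) = 1 := fun K hK => (hsol K hK).2.2
  have hycont : ∀ K ∈ Ici (0:ℝ), ContinuousOn (y K) (Icc (-hm) (0:ℝ)) :=
    fun K hK x hx => (hyd K hK x hx).continuousAt.continuousWithinAt
  -- the sign-normalized solution ψ of the K = 0 problem
  obtain ⟨σ, hσ1, hψpos⟩ : ∃ σ : ℝ, (σ = 1 ∨ σ = -1) ∧
      ∀ x ∈ Icc (-hm) (0:ℝ), 0 < σ * (Um x - c) := by
    have hUcont : ContinuousOn (fun x => Um x - c) (Icc (-hm) (0:ℝ)) :=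
      fun x hx => ((hUm x hx).continuousAt.sub continuousAt_const).continuousWithinAt
    have hend : -hm ∈ Icc (-hm) (0:ℝ) := ⟨le_refl _, ha0.le⟩
    rcases lt_or_gt_of_ne (sub_ne_zero.mpr (hc (-hm) hend)) with hneg | hpos
    · refine ⟨-1, Or.inr rfl, fun x hx => ?_⟩
      rcases lt_or_gt_of_ne (sub_ne_zero.mpr (hc x hx)) with h | h
      · nlinarith
      · exfalso
        have : (0:ℝ) ∈ Icc (Um (-hm) - c) (Um x - c) := ⟨hneg.le, h.le⟩
        have := intermediate_value_Icc hx.1 (hUcont.mono (Icc_subset_Icc_right hx.2)) this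
        obtain ⟨t, ht, ht0⟩ := this
        exact hsub t ⟨ht.1, ht.2.trans hx.2⟩ ht0
    · refine ⟨1, Or.inl rfl, fun x hx => ?_⟩
      rcases lt_or_gt_of_ne (sub_ne_zero.mpr (hc x hx)) with h | h
      · exfalso
        have : (0:ℝ) ∈ Icc (Um x - c) (Um (-hm) - c) := ⟨h.le, hpos.le⟩
        have := intermediate_value_Icc' hx.1 (hUcont.mono (Icc_subset_Icc_right hx.2)) this
        obtain ⟨t, ht, ht0⟩ := this
        exact hsub t ⟨ht.1, ht.2.trans hx.2⟩ ht0
      · nlinarith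
  set ψ : ℝ → ℝ := fun x => σ * (Um x - c) with hψ_def
  set ψ' : ℝ → ℝ := fun x => σ * Um' x with hψ'_def
  have hψd : ∀ x ∈ Icc (-hm) (0:ℝ), HasDerivAt ψ (ψ' x) x :=
    fun x hx => ((hUm x hx).sub_const c).const_mul σ
  have hψ'd : ∀ x ∈ Icc (-hm) (0:ℝ), HasDerivAt ψ' (σ * Um'' x) x :=
    fun x hx => (hUm' x hx).const_mul σ
  have hψq : ∀ x ∈ Icc (-hm) (0:ℝ), σ * Um'' x = q x * ψ x := by
    intro x hx
    have h := hsub x hx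
    simp only [hq_def, hψ_def]
    field_simp
  have hψne : ∀ x ∈ Icc (-hm) (0:ℝ), ψ x ≠ 0 := fun x hx => (hψpos x hx).ne'
  -- Wronskian-positivity step
  have haveYpos : ∀ x ∈ Ioc (-hm) (0:ℝ), (∀ t ∈ Icc (-hm) x, 0 ≤ p t) → 0 < p x := by
    intro x hx hnn
    have hIx : Icc (-hm) x ⊆ Icc (-hm) (0:ℝ) := Icc_subset_Icc_right hx.2
    set W : ℝ → ℝ := fun u => y' K₀ u * ψ u - p u * ψ' u with hW_def
    have hWd : ∀ u ∈ Icc (-hm) (0:ℝ), HasDerivAt W (K₀ * (p u * ψ u)) u := by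
      intro u hu
      have h1 := hyd K₀ hK₀' u hu
      have h2 := hy'd K₀ hK₀' u hu
      have hD : HasDerivAt W
          (y'' K₀ u * ψ u + y' K₀ u * ψ' u - (y' K₀ u * ψ' u + p u * (σ * Um'' u))) u :=
        ((h2.mul (hψd u hu)).sub (h1.mul (hψ'd u hu)))
      convert hD using 1
      rw [hode K₀ hK₀' u hu, hψq u hu]
      ring
    have hWc : ContinuousOn W (Icc (-hm) x) :=
      fun u hu => (hWd u (hIx hu)).continuousAt.continuousWithinAt
    have hWmono : MonotoneOn W (Icc (-hm) x) := by
      apply monotoneOn_of_deriv_nonneg (convex_Icc _ _) hWc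
      · intro u hu
        rw [interior_Icc] at hu
        exact ((hWd u (hIx (Ioo_subset_Icc_self hu))).differentiableAt).differentiableWithinAt
      · intro u hu
        rw [interior_Icc] at hu
        have huI : u ∈ Icc (-hm) x := Ioo_subset_Icc_self hu
        rw [(hWd u (hIx huI)).deriv]
        have h1 : 0 ≤ p u := hnn u huI
        have h2 : 0 < ψ u := hψpos u (hIx huI)
        positivity
    have hWa : W (-hm) = ψ (-hm) := by
      simp only [hW_def, hp_def, hy0 K₀ hK₀', hy'0 K₀ hK₀']
      ring
    have hWpos : ∀ u ∈ Icc (-hm) x, 0 < W u := by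
      intro u hu
      have : W (-hm) ≤ W u := hWmono ⟨le_refl _, hx.1.le⟩ hu hu.1
      rw [hWa] at this
      exact lt_of_lt_of_le (hψpos (-hm) ⟨le_refl _, ha0.le⟩) this
    -- ratio p/ψ strictly increasing
    set r : ℝ → ℝ := fun u => p u / ψ u with hr_def
    have hrd : ∀ u ∈ Icc (-hm) (0:ℝ), HasDerivAt r (W u / ψ u ^ 2) u := by
      intro u hu
      exact (hyd K₀ hK₀' u hu).div (hψd u hu) (hψne u hu)
    have hrc : ContinuousOn r (Icc (-hm) x) :=
      fun u hu => (hrd u (hIx hu)).continuousAt.continuousWithinAt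
    have hrmono : StrictMonoOn r (Icc (-hm) x) := by
      apply strictMonoOn_of_deriv_pos (convex_Icc _ _) hrc
      intro u hu
      rw [interior_Icc] at hu
      have huI : u ∈ Icc (-hm) x := Ioo_subset_Icc_self hu
      rw [(hrd u (hIx huI)).deriv]
      exact div_pos (hWpos u huI) (pow_pos (hψpos u (hIx huI)) 2)
    have h0 : r (-hm) < r x :=
      hrmono ⟨le_refl _, hx.1.le⟩ ⟨hx.1.le, le_refl _⟩ hx.1
    have hra : r (-hm) = 0 := by
      simp [hr_def, hp_def, hy0 K₀ hK₀']
    rw [hra] at h0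
    have hψx : 0 < ψ x := hψpos x (hIx ⟨hx.1.le, le_refl _⟩)
    have := mul_pos h0 hψx
    rwa [div_mul_cancel₀ _ hψx.ne'] at this
  -- continuous induction: p ≥ 0 on Icc
  have hp_nonneg : ∀ t ∈ Icc (-hm) (0:ℝ), 0 ≤ p t := by
    set s : Set ℝ := {x | ∀ t ∈ Icc (-hm) x, 0 ≤ p t} with hs_def
    have hsub' : Icc (-hm) (0:ℝ) ⊆ s := by
      apply IsClosed.Icc_subset_of_forall_exists_gt
      · -- closedness
        apply IsSeqClosed.isClosed
        intro xs x hxs hlim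
        refine ⟨?_, isClosed_Icc.mem_of_tendsto hlim (Eventually.of_forall fun n => (hxs n).2)⟩
        intro t ht
        rcases eq_or_lt_of_le ht.2 with rfl | htx
        · -- t = x : use continuity
          have hxI : t ∈ Icc (-hm) (0:ℝ) :=
            isClosed_Icc.mem_of_tendsto hlim (Eventually.of_forall fun n => (hxs n).2)
          have hcont : ContinuousAt p t := (hyd K₀ hK₀' t hxI).continuousAt
          have hyn : ∀ n, 0 ≤ p (xs n) := fun n =>
            (hxs n).1 (xs n) ⟨(hxs n).2.1, le_refl _⟩
          exact ge_of_tendsto (hcont.tendsto.comp hlim) (Eventually.of_forall hyn)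
        · -- t < x : eventually xs n > t
          have : ∀ᶠ n in atTop, t < xs n := hlim.eventually (eventually_gt_nhds htx)
          obtain ⟨n, hn⟩ := this.exists
          exact (hxs n).1 t ⟨ht.1, hn.le⟩
      · -- -hm ∈ s
        intro t ht
        have h' : t = -hm := le_antisymm ht.2 ht.1
        rw [h']
        show (0:ℝ) ≤ y K₀ (-hm)
        rw [hy0 K₀ hK₀']
      · -- step
        rintro x ⟨hxs, hxI⟩ Y hY
        rcases eq_or_lt_of_le hxI.1 with rfl | hax
        · -- x = -hm : use y' = 1
          have h1 : HasDerivAt (y K₀) 1 (-hm) := by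
            have := hyd K₀ hK₀' (-hm) ⟨le_refl _, ha0.le⟩
            rwa [hy'0 K₀ hK₀'] at this
          have hslope : Tendsto (slope (y K₀) (-hm)) (𝓝[>] (-hm)) (𝓝 1) :=
            (hasDerivAt_iff_tendsto_slope.mp h1).mono_left
              (nhdsWithin_mono _ fun u hu => ne_of_gt hu)
          have hev : ∀ᶠ u in 𝓝[>] (-hm), 0 < slope (y K₀) (-hm) u :=
            hslope.eventually (eventually_gt_nhds one_pos)
          obtain ⟨e, he, he'⟩ := mem_nhdsGT_iff_exists_Ioo_subset.mp hev
          set m : ℝ := min e Y with hm_def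
          have hmgt : -hm < m := lt_min he hY
          refine ⟨(-hm + m)/2, ?_, by linarith, ?_⟩
          · intro t ht
            rcases eq_or_lt_of_le ht.1 with h | h
            · rw [← h]
              show (0:ℝ) ≤ y K₀ (-hm)
              rw [hy0 K₀ hK₀']
            · have hte : t ∈ Ioo (-hm) e := by
                refine ⟨h, lt_of_le_of_lt ht.2 ?_⟩
                have := min_le_left e Y
                simp only [hm_def] at *
                linarith
              have hs' : 0 < slope (y K₀) (-hm) t := he' hte
              rw [slope_def_field, hy0 K₀ hK₀', sub_zero] at hs'
              have htm : 0 < t - (-hm) := by linarith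
              have := mul_pos hs' htm
              rw [div_mul_cancel₀ _ htm.ne'] at this
              exact this.le
          · have := min_le_right e Y
            simp only [hm_def] at *
            linarith
        · -- -hm < x : p x > 0, take points slightly to the right
          have hpx : 0 < p x := haveYpos x ⟨hax, hxI.2.le⟩ (fun t ht => hxs t ht)
          have hcont : ContinuousAt p x :=
            (hyd K₀ hK₀' x ⟨hxI.1, hxI.2.le⟩).continuousAt
          have hev : ∀ᶠ u in 𝓝 x, 0 < p u := hcont.eventually_const_lt hpx
          obtain ⟨ε, hε, hball⟩ := Metric.eventually_nhds_iff_ball.mp hev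
          refine ⟨min (x + ε/2) Y, ?_, ?_⟩
          · intro t ht
            rcases le_or_gt t x with h | h
            · exact hxs t ⟨ht.1, h⟩
            · apply (hball t ?_).le
              rw [Metric.mem_ball, Real.dist_eq, abs_lt]
              have := ht.2.trans (min_le_left _ _)
              constructor <;> linarith
          · exact ⟨lt_min (by linarith) hY, min_le_right _ _⟩
    intro t ht
    exact hsub' ht t ⟨ht.1, le_refl _⟩
  have hppos : ∀ x ∈ Ioc (-hm) (0:ℝ), 0 < p x :=
    fun x hx => haveYpos x hx (fun t ht => hp_nonneg t ⟨ht.1, ht.2.trans hx.2⟩)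
  -- ============ PART 2 ============
  -- continuity of q and bound M
  have hqc : ContinuousOn q (Icc (-hm) (0:ℝ)) := by
    apply hUmc.div
    · exact fun x hx => ((hUm x hx).continuousAt.sub continuousAt_const).continuousWithinAt
    · exact hsub
  obtain ⟨M0, hM0⟩ := isCompact_Icc.exists_bound_of_continuousOn hqc
  set M : ℝ := max M0 0 with hM_def
  have hM : ∀ x ∈ Icc (-hm) (0:ℝ), |q x| ≤ M := by
    intro x hx
    calc |q x| = ‖q x‖ := (Real.norm_eq_abs _).symm
      _ ≤ M0 := hM0 x hx
      _ ≤ M := le_max_left _ _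
  have hMnn : (0:ℝ) ≤ M := le_max_right _ _
  -- uniform bound B via Gronwall
  set C : ℝ := K₀ + M + 2 with hC_def
  have hC1 : (1:ℝ) ≤ C := by simp only [hC_def]; linarith
  have hC0 : (0:ℝ) ≤ C := le_trans zero_le_one hC1
  set B : ℝ := Real.exp (C * hm) with hB_def
  have hB0 : (0:ℝ) < B := Real.exp_pos _
  have hyB : ∀ K ∈ Icc (0:ℝ) (K₀+1), ∀ x ∈ Icc (-hm) (0:ℝ), |y K x| ≤ B := by
    intro K hK x hx
    have hK' : K ∈ Ici (0:ℝ) := hK.1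
    have key := norm_le_gronwallBound_of_norm_deriv_right_le
      (f := fun u => (y K u, y' K u)) (f' := fun u => (y' K u, y'' K u))
      (δ := 1) (K := C) (ε := 0) (a := -hm) (b := 0)
      (fun u hu => ((hyd K hK' u hu).continuousAt.prodMk
        (hy'd K hK' u hu).continuousAt).continuousWithinAt)
      (fun u hu => ((hyd K hK' u (Ico_subset_Icc_self hu)).prodMk
        (hy'd K hK' u (Ico_subset_Icc_self hu))).hasDerivWithinAt)
      (by simp [Prod.norm_def, hy0 K hK', hy'0 K hK'])
      ?_ x hx
    · have h1 : |y K x| ≤ ‖((y K x, y' K x) : ℝ × ℝ)‖ := by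
        rw [Prod.norm_def]
        exact le_trans (le_of_eq (Real.norm_eq_abs _).symm) (le_max_left _ _)
      have h2 := le_trans h1 key
      rw [gronwallBound_ε0, one_mul] at h2
      refine le_trans h2 ?_
      rw [hB_def]
      apply Real.exp_le_exp.mpr
      have : x - -hm ≤ hm := by linarith [hx.2]
      nlinarith [hx.1, hx.2]
    · intro u hu
      have huI : u ∈ Icc (-hm) (0:ℝ) := Ico_subset_Icc_self hu
      have hqu := hM u huI
      rw [add_zero, Prod.norm_def, Prod.norm_def]
      simp only [Real.norm_eq_abs]
      have hKC : |K + q u| ≤ C := by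
        have h := abs_le.mp hqu
        rw [abs_le]
        constructor
        · simp only [hC_def]; linarith [hK.1, hK.2]
        · simp only [hC_def]; linarith [hK.1, hK.2]
      have hmax0 : (0:ℝ) ≤ max |y K u| |y' K u| :=
        le_trans (abs_nonneg _) (le_max_left _ _)
      apply max_le
      · calc |y' K u| ≤ max |y K u| |y' K u| := le_max_right _ _
          _ ≤ C * max |y K u| |y' K u| := le_mul_of_one_le_left hmax0 hC1
      · calc |y'' K u| = |K + q u| * |y K u| := by
              rw [hode K hK' u huI, abs_mul]
          _ ≤ C * |y K u| := mul_le_mul_of_nonneg_right hKC (abs_nonneg _)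
          _ ≤ C * max |y K u| |y' K u| :=
              mul_le_mul_of_nonneg_left (le_max_left _ _) hC0
  -- Wronskian identity
  have hWid : ∀ K ∈ Ici (0:ℝ), ∀ x ∈ Icc (-hm) (0:ℝ),
      y' K x * p x - y K x * y' K₀ x = (K - K₀) * ∫ s in (-hm)..x, y K s * p s := by
    intro K hK
    have hintc : ContinuousOn (fun s => y K s * p s) (Icc (-hm) (0:ℝ)) :=
      (hycont K hK).mul (hycont K₀ hK₀')
    have hFTC := ftc_icc ha0 hintc
    apply eq_of_has_deriv_right_eq (a := -hm) (b := 0)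
      (f' := fun u => (K - K₀) * (y K u * p u))
      (f := fun u => y' K u * p u - y K u * y' K₀ u)
      (g := fun u => (K - K₀) * ∫ s in (-hm)..u, y K s * p s)
    · intro u hu
      have huI : u ∈ Icc (-hm) (0:ℝ) := Ico_subset_Icc_self hu
      have hD : HasDerivAt (fun u => y' K u * p u - y K u * y' K₀ u)
          (y'' K u * p u + y' K u * y' K₀ u - (y' K u * y' K₀ u + y K u * y'' K₀ u)) u :=
        ((hy'd K hK u huI).mul (hyd K₀ hK₀' u huI)).sub
          ((hyd K hK u huI).mul (hy'd K₀ hK₀' u huI))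
      have heq : (K - K₀) * (y K u * p u)
          = y'' K u * p u + y' K u * y' K₀ u - (y' K u * y' K₀ u + y K u * y'' K₀ u) := by
        rw [hode K hK u huI, hode K₀ hK₀' u huI]
        show (K - K₀) * (y K u * y K₀ u) = _
        ring
      rw [heq]
      exact hD.hasDerivWithinAt
    · intro u hu
      exact ((hFTC u (Ico_subset_Icc_self hu)).const_mul
        (K - K₀)).mono_of_mem_nhdsWithin (Icc_mem_nhdsGE_of_mem hu)
    · intro u hu
      exact (((hy'd K hK u hu).mul (hyd K₀ hK₀' u hu)).sub
        ((hyd K hK u hu).mul (hy'd K₀ hK₀' u hu))).continuousAt.continuousWithinAt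
    · exact continuousOn_const.mul (fun u hu => (hFTC u hu).continuousWithinAt)
    · show y' K (-hm) * p (-hm) - y K (-hm) * y' K₀ (-hm)
        = (K - K₀) * ∫ s in (-hm)..(-hm), y K s * p s
      have hp0 : p (-hm) = 0 := hy0 K₀ hK₀'
      rw [hp0, hy0 K hK, integral_same]
      ring
  -- ratio identity for each K
  have hDiv : ∀ K ∈ Ici (0:ℝ), ∀ t₀ ∈ Ioc (-hm) (0:ℝ), ∀ x ∈ Ioc (-hm) (0:ℝ), t₀ ≤ x →
      y K x / p x - y K t₀ / p t₀
        = (K - K₀) * ∫ s in t₀..x, (∫ u in (-hm)..s, y K u * p u) / p s ^ 2 := by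
    intro K hK t₀ ht₀ x hx htx
    rcases eq_or_lt_of_le htx with rfl | hlt
    · simp
    · have hIKc : ContinuousOn (fun s0 => ∫ u in (-hm)..s0, y K u * p u) (Icc (-hm) (0:ℝ)) :=
        fun u hu => (ftc_icc ha0 ((hycont K hK).mul (hycont K₀ hK₀')) u hu).continuousWithinAt
      have hsubO : Icc t₀ x ⊆ Ioc (-hm) (0:ℝ) :=
        fun u hu => ⟨lt_of_lt_of_le ht₀.1 hu.1, hu.2.trans hx.2⟩
      have hsubI : Icc t₀ x ⊆ Icc (-hm) (0:ℝ) := subset_trans hsubO Ioc_subset_Icc_self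
      have hintc : ContinuousOn (fun s0 => (∫ u in (-hm)..s0, y K u * p u) / p s0 ^ 2)
          (Icc t₀ x) :=
        (hIKc.mono hsubI).div (((hycont K₀ hK₀').mono hsubI).pow 2)
          (fun u hu => pow_ne_zero 2 (hppos u (hsubO hu)).ne')
      have hFTC2 := ftc_icc hlt hintc
      apply eq_of_has_deriv_right_eq (a := t₀) (b := x)
        (f' := fun u => (K - K₀) * ((∫ u' in (-hm)..u, y K u' * p u') / p u ^ 2))
        (f := fun u => y K u / p u - y K t₀ / p t₀)
        (g := fun u => (K - K₀) * ∫ s in t₀..u, (∫ u' in (-hm)..s, y K u' * p u') / p s ^ 2)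
        ?_ ?_ ?_ ?_ ?_ x ⟨htx, le_refl _⟩
      · intro u hu
        have huO : u ∈ Ioc (-hm) (0:ℝ) := hsubO (Ico_subset_Icc_self hu)
        have huI : u ∈ Icc (-hm) (0:ℝ) := Ioc_subset_Icc_self huO
        have hD : HasDerivAt (fun u => y K u / p u - y K t₀ / p t₀)
            ((y' K u * p u - y K u * y' K₀ u) / p u ^ 2) u :=
          HasDerivAt.sub_const _ (((hyd K hK u huI).div (hyd K₀ hK₀' u huI)
            (hppos u huO).ne'))
        have heq : (K - K₀) * ((∫ u' in (-hm)..u, y K u' * p u') / p u ^ 2)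
            = (y' K u * p u - y K u * y' K₀ u) / p u ^ 2 := by
          rw [hWid K hK u huI]
          ring
        have hD' := hD.hasDerivWithinAt (s := Ici u)
        convert hD' using 1
      · intro u hu
        exact ((hFTC2 u (Ico_subset_Icc_self hu)).const_mul
          (K - K₀)).mono_of_mem_nhdsWithin (Icc_mem_nhdsGE_of_mem hu)
      · intro u hu
        exact (HasDerivAt.sub_const _ (((hyd K hK u (hsubI hu)).div (hyd K₀ hK₀' u (hsubI hu))
          (hppos u (hsubO hu)).ne'))).continuousAt.continuousWithinAt
      · exact continuousOn_const.mul (fun u hu => (hFTC2 u hu).continuousWithinAt)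
      · show y K t₀ / p t₀ - y K t₀ / p t₀
          = (K - K₀) * ∫ s in t₀..t₀, (∫ u' in (-hm)..s, y K u' * p u') / p s ^ 2
        rw [integral_same]
        ring
  -- filter setup
  set l' : Filter ℝ := 𝓝[Ici 0 \ {K₀}] K₀ with hl'_def
  have hl'ne : l'.NeBot := by
    refine Filter.NeBot.mono (nhdsGT_neBot K₀) (nhdsWithin_mono _ ?_)
    intro k hk
    exact ⟨le_trans hK₀ (le_of_lt hk), fun h => absurd h (ne_of_gt hk)⟩
  have hl'le : l' ≤ 𝓝[Ici 0] K₀ := nhdsWithin_mono _ diff_subset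
  have hl'mem : Ici (0:ℝ) \ {K₀} ∈ l' := self_mem_nhdsWithin
  have hl'bd : ∀ᶠ K in l', K ∈ Icc (0:ℝ) (K₀+1) ∧ K ≠ K₀ := by
    have h1 : ∀ᶠ K in l', K < K₀ + 1 :=
      eventually_nhdsWithin_of_eventually_nhds (eventually_lt_nhds (by linarith))
    filter_upwards [h1, hl'mem] with K h1K h2K
    exact ⟨⟨h2K.1, h1K.le⟩, h2K.2⟩
  have hcv : ∀ u ∈ Icc (-hm) (0:ℝ), Tendsto (fun K => y K u) l' (𝓝 (p u)) :=
    fun u hu => ((hz u hu).continuousWithinAt).mono_left hl'le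
  have hK₀mem : K₀ ∈ Icc (0:ℝ) (K₀+1) := ⟨hK₀, by linarith⟩
  -- the key identity for z
  have hkey : ∀ t₀ ∈ Ioc (-hm) (0:ℝ), ∀ x ∈ Ioc (-hm) (0:ℝ), t₀ ≤ x →
      z x / p x - z t₀ / p t₀
        = ∫ s in t₀..x, (∫ u in (-hm)..s, p u * p u) / p s ^ 2 := by
    intro t₀ ht₀ x hx htx
    have htI : t₀ ∈ Icc (-hm) (0:ℝ) := Ioc_subset_Icc_self ht₀
    have hxI : x ∈ Icc (-hm) (0:ℝ) := Ioc_subset_Icc_self hx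
    set H : ℝ → ℝ := fun K => ∫ s in t₀..x, (∫ u in (-hm)..s, y K u * p u) / p s ^ 2
      with hH_def
    have hF : HasDerivWithinAt (fun K => y K x / p x - y K t₀ / p t₀)
        (z x / p x - z t₀ / p t₀) (Ici 0) K₀ :=
      ((hz x hxI).div_const (p x)).sub ((hz t₀ htI).div_const (p t₀))
    have hslope : Tendsto (slope (fun K => y K x / p x - y K t₀ / p t₀) K₀) l'
        (𝓝 (z x / p x - z t₀ / p t₀)) := hasDerivWithinAt_iff_tendsto_slope.mp hF
    have heq : (slope (fun K => y K x / p x - y K t₀ / p t₀) K₀) =ᶠ[l'] H := by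
      filter_upwards [hl'mem] with K hK
      have hK0 : K ∈ Ici (0:ℝ) := hK.1
      have hKne : K ≠ K₀ := hK.2
      have hv0 : y K₀ x / p x - y K₀ t₀ / p t₀ = 0 := by
        have h1 : y K₀ x = p x := rfl
        have h2 : y K₀ t₀ = p t₀ := rfl
        rw [h1, h2, div_self (hppos x hx).ne', div_self (hppos t₀ ht₀).ne']
        ring
      rw [slope_def_field]
      rw [hDiv K hK0 t₀ ht₀ x hx htx, hv0, sub_zero,
        mul_div_cancel_left₀ _ (sub_ne_zero.mpr hKne)]
    have hH1 : Tendsto H l' (𝓝 (z x / p x - z t₀ / p t₀)) := hslope.congr' heq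
    -- dominated convergence
    obtain ⟨m, hm0, hmle⟩ : ∃ m, 0 < m ∧ ∀ s ∈ Icc t₀ x, m ≤ p s := by
      obtain ⟨s₀, hs₀, hmin⟩ := isCompact_Icc.exists_isMinOn
        (nonempty_Icc.mpr htx) (((hycont K₀ hK₀').mono
          (fun u hu => ⟨le_trans htI.1 hu.1, hu.2.trans hxI.2⟩)))
      refine ⟨p s₀, hppos s₀ ⟨lt_of_lt_of_le ht₀.1 hs₀.1, hs₀.2.trans hxI.2⟩, ?_⟩
      exact fun s hs => hmin hs
    have hsubO : Icc t₀ x ⊆ Ioc (-hm) (0:ℝ) :=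
      fun u hu => ⟨lt_of_lt_of_le ht₀.1 hu.1, hu.2.trans hx.2⟩
    have hsubI : Icc t₀ x ⊆ Icc (-hm) (0:ℝ) := subset_trans hsubO Ioc_subset_Icc_self
    have huIocsub : Ι t₀ x ⊆ Icc t₀ x := by
      rw [uIoc_of_le htx]; exact Ioc_subset_Icc_self
    have hinner_bd : ∀ K ∈ Icc (0:ℝ) (K₀ + 1), ∀ s ∈ Icc (-hm) (0:ℝ),
        |∫ u in (-hm)..s, y K u * p u| ≤ B * B * hm := by
      intro K hK s hs
      have h1 : ∀ u ∈ Ι (-hm) s, ‖y K u * p u‖ ≤ B * B := by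
        intro u hu
        have huI : u ∈ Icc (-hm) (0:ℝ) := by
          rw [uIoc_of_le hs.1] at hu
          exact ⟨hu.1.le, hu.2.trans hs.2⟩
        rw [Real.norm_eq_abs, abs_mul]
        exact mul_le_mul (hyB K hK u huI) (hyB K₀ hK₀mem u huI) (abs_nonneg _) hB0.le
      calc |∫ u in (-hm)..s, y K u * p u|
          = ‖∫ u in (-hm)..s, y K u * p u‖ := (Real.norm_eq_abs _).symm
        _ ≤ B * B * |s - (-hm)| := intervalIntegral.norm_integral_le_of_norm_le_const h1
        _ ≤ B * B * hm := by
            apply mul_le_mul_of_nonneg_left _ (by positivity)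
            rw [abs_of_nonneg (by linarith [hs.1])]
            linarith [hs.2]
    have hinner_lim : ∀ s ∈ Icc (-hm) (0:ℝ),
        Tendsto (fun K => ∫ u in (-hm)..s, y K u * p u) l'
          (𝓝 (∫ u in (-hm)..s, p u * p u)) := by
      intro s hs
      have hsubs : Ι (-hm) s ⊆ Icc (-hm) (0:ℝ) := by
        rw [uIoc_of_le hs.1]
        exact fun u hu => ⟨hu.1.le, hu.2.trans hs.2⟩
      apply intervalIntegral.tendsto_integral_filter_of_dominated_convergence
        (bound := fun _ => B * B)
      · filter_upwards [hl'mem] with K hK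
        exact (((hycont K hK.1).mul (hycont K₀ hK₀')).mono hsubs).aestronglyMeasurable
          measurableSet_uIoc
      · filter_upwards [hl'bd] with K hK
        apply ae_of_all
        intro u hu
        have huI := hsubs hu
        rw [Real.norm_eq_abs, abs_mul]
        exact mul_le_mul (hyB K hK.1 u huI) (hyB K₀ hK₀mem u huI) (abs_nonneg _) hB0.le
      · exact intervalIntegrable_const
      · apply ae_of_all
        intro u hu
        exact (hcv u (hsubs hu)).mul_const (p u)
    have hH2 : Tendsto H l'
        (𝓝 (∫ s in t₀..x, (∫ u in (-hm)..s, p u * p u) / p s ^ 2)) := by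
      apply intervalIntegral.tendsto_integral_filter_of_dominated_convergence
        (bound := fun _ => B * B * hm / m ^ 2)
      · filter_upwards [hl'mem] with K hK
        have hIKc : ContinuousOn (fun s0 => ∫ u in (-hm)..s0, y K u * p u)
            (Icc (-hm) (0:ℝ)) :=
          fun u hu => (ftc_icc ha0 ((hycont K hK.1).mul (hycont K₀ hK₀')) u hu).continuousWithinAt
        have : ContinuousOn (fun s0 => (∫ u in (-hm)..s0, y K u * p u) / p s0 ^ 2)
            (Icc t₀ x) :=
          (hIKc.mono hsubI).div (((hycont K₀ hK₀').mono hsubI).pow 2)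
            (fun u hu => pow_ne_zero 2 (hppos u (hsubO hu)).ne')
        exact (this.mono huIocsub).aestronglyMeasurable measurableSet_uIoc
      · filter_upwards [hl'bd] with K hK
        apply ae_of_all
        intro s hs
        have hsIcc : s ∈ Icc t₀ x := huIocsub hs
        have hsI : s ∈ Icc (-hm) (0:ℝ) := hsubI hsIcc
        have hps : m ≤ p s := hmle s hsIcc
        have hps2 : m ^ 2 ≤ p s ^ 2 := by nlinarith
        rw [Real.norm_eq_abs, abs_div, abs_of_nonneg (by positivity : (0:ℝ) ≤ p s ^ 2)]
        apply div_le_div₀ (by positivity) (hinner_bd K hK.1 s hsI) (by positivity) hps2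
      · exact intervalIntegrable_const
      · apply ae_of_all
        intro s hs
        exact (hinner_lim s (hsubI (huIocsub hs))).div_const (p s ^ 2)
    exact tendsto_nhds_unique hH1 hH2
  -- rewrite p*p as squares
  have hpp : (fun u : ℝ => p u * p u) = fun u => y K₀ u ^ 2 := by
    funext u
    exact (pow_two (y K₀ u)).symm
  -- the main derivative statement
  have main2 : ∀ x ∈ Ioc (-hm) (0:ℝ),
      HasDerivWithinAt (fun t => z t / y K₀ t)
        ((∫ s in (-hm)..x, y K₀ s ^ 2) / y K₀ x ^ 2) (Icc (-hm) 0) x ∧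
      0 < (∫ s in (-hm)..x, y K₀ s ^ 2) / y K₀ x ^ 2 := by
    intro x hx
    have hJpos : 0 < ∫ s in (-hm)..x, y K₀ s ^ 2 := by
      apply intervalIntegral_pos_of_pos_on
      · apply ContinuousOn.intervalIntegrable
        apply ((hycont K₀ hK₀').pow 2).mono
        rw [uIcc_of_le hx.1.le]
        exact Icc_subset_Icc_right hx.2
      · intro s hs
        exact pow_pos (hppos s ⟨hs.1, hs.2.le.trans hx.2⟩) 2
      · exact hx.1
    refine ⟨?_, div_pos hJpos (pow_pos (hppos x hx) 2)⟩
    set t₁ : ℝ := (-hm + x) / 2 with ht₁_def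
    have ht₁x : t₁ < x := by simp only [ht₁_def]; linarith [hx.1]
    have hat₁ : -hm < t₁ := by simp only [ht₁_def]; linarith [hx.1]
    have ht₁0 : t₁ < 0 := lt_of_lt_of_le ht₁x hx.2
    have ht₁ : t₁ ∈ Ioc (-hm) (0:ℝ) := ⟨hat₁, ht₁0.le⟩
    have hIccsub : Icc t₁ 0 ⊆ Ioc (-hm) (0:ℝ) :=
      fun u hu => ⟨lt_of_lt_of_le hat₁ hu.1, hu.2⟩
    have hIccsub' : Icc t₁ 0 ⊆ Icc (-hm) (0:ℝ) := subset_trans hIccsub Ioc_subset_Icc_self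
    have hJc : ContinuousOn (fun s => ∫ w in (-hm)..s, y K₀ w ^ 2) (Icc (-hm) (0:ℝ)) :=
      fun u hu => (ftc_icc ha0 ((hycont K₀ hK₀').pow 2) u hu).continuousWithinAt
    have hintc2 : ContinuousOn (fun s => (∫ w in (-hm)..s, y K₀ w ^ 2) / p s ^ 2)
        (Icc t₁ 0) :=
      (hJc.mono hIccsub').div (((hycont K₀ hK₀').mono hIccsub').pow 2)
        (fun u hu => pow_ne_zero 2 (hppos u (hIccsub hu)).ne')
    have hFTC3 := ftc_icc ht₁0 hintc2
    have hxmem : x ∈ Icc t₁ 0 := ⟨ht₁x.le, hx.2⟩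
    have hGd : HasDerivWithinAt
        (fun u => z t₁ / p t₁ + ∫ s in t₁..u, (∫ w in (-hm)..s, y K₀ w ^ 2) / p s ^ 2)
        ((∫ w in (-hm)..x, y K₀ w ^ 2) / p x ^ 2) (Icc t₁ 0) x :=
      (hFTC3 x hxmem).const_add _
    have hEq : ∀ u ∈ Icc t₁ 0, z u / p u
        = z t₁ / p t₁ + ∫ s in t₁..u, (∫ w in (-hm)..s, y K₀ w ^ 2) / p s ^ 2 := by
      intro u hu
      have h := hkey t₁ ht₁ u (hIccsub hu) hu.1
      rw [hpp] at h
      linarith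
    have hD2 : HasDerivWithinAt (fun u => z u / p u)
        ((∫ w in (-hm)..x, y K₀ w ^ 2) / p x ^ 2) (Icc t₁ 0) x :=
      hGd.congr (fun u hu => hEq u hu) (hEq x hxmem)
    have hmem : Icc t₁ 0 ∈ 𝓝[Icc (-hm) 0] x :=
      mem_nhdsWithin.mpr ⟨Ioi t₁, isOpen_Ioi, ht₁x, fun u hu => ⟨hu.1.le, hu.2.2⟩⟩
    exact hD2.mono_of_mem_nhdsWithin hmem
  refine ⟨hppos, main2, ?_⟩
  -- strict monotonicity
  have hcontzp : ContinuousOn (fun u => z u / y K₀ u) (Ioc (-hm) (0:ℝ)) :=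
    fun u hu => ((main2 u hu).1).continuousWithinAt.mono Ioc_subset_Icc_self
  apply strictMonoOn_of_deriv_pos (convex_Ioc _ _) hcontzp
  intro u hu
  rw [interior_Ioc] at hu
  have h := main2 u (Ioo_subset_Ioc_self hu)
  have hD : HasDerivAt (fun u => z u / y K₀ u)
      ((∫ s in (-hm)..u, y K₀ s ^ 2) / y K₀ u ^ 2) u :=
    h.1.hasDerivAt (Icc_mem_nhds hu.1 hu.2)
  rw [hD.deriv]
  exact h.2
end

section
/- Let h₋ > 0, U⁻ ∈ C²([−h₋, 0]; ℝ), and c ∈ ℝ \ U⁻([−h₋, 0]). For K ≥ 0 let y(K, ·) := y⁻(c, √K, ·) be the unique solution on [−h₋, 0] of −y'' + (K + (U⁻)''/(U⁻ − c)) y = 0 with y(−h₋) = 0, y'(−h₋) = 1, and define G(K) := y'(K, 0)/y(K, 0). Then G is twice differentiable on [0, ∞) and, denoting by z(x) the derivative of K ↦ y(K, x), G''(K) = −2 ∫_{−h₋}^{0} ( y(K, x)² / y(K, 0)² ) ( z(0)/y(K, 0) − z(x)/y(K, x) ) dx < 0 for every K ≥ 0; i.e., K ↦ Y⁻(c, √K)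 is strictly concave in K = k². -/
open Set MeasureTheory intervalIntegral


open Set MeasureTheory intervalIntegral Filter Real Topology
open scoped Interval

namespace ConcavityAux

lemma integral_pos_of_nonneg_of_pos {f : ℝ → ℝ} {a b t₀ : ℝ} (hab : a < b)
    (hf : ContinuousOn f (Icc a b)) (h0 : ∀ t ∈ Icc a b, 0 ≤ f t)
    (ht₀ : t₀ ∈ Icc a b) (hpos : 0 < f t₀) : 0 < ∫ t in a..b, f t := by
  have hev : ∀ᶠ t in 𝓝[Icc a b] t₀, f t₀ / 2 < f t :=
    (hf t₀ ht₀).eventually (eventually_gt_nhds (half_lt_self hpos))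
  rw [eventually_nhdsWithin_iff] at hev
  rw [Metric.eventually_nhds_iff] at hev
  obtain ⟨δ, hδ0, hδ⟩ := hev
  set u := max a (t₀ - δ/2) with hu
  set v := min b (t₀ + δ/2) with hv
  have hau : a ≤ u := le_max_left _ _
  have hvb : v ≤ b := min_le_left _ _
  have huv : u < v := by
    apply max_lt
    · exact lt_min hab (by cases ht₀ with | intro h1 h2 => linarith)
    · exact lt_min (by cases ht₀ with | intro h1 h2 => linarith) (by linarith)
  have hmid : ∀ t ∈ Icc u v, f t₀ / 2 ≤ f t := by
    intro t ht
    have h1 : t ∈ Icc a b := ⟨le_trans hau ht.1, le_trans ht.2 hvb⟩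
    have h2 : dist t t₀ < δ := by
      rw [Real.dist_eq, abs_lt]
      constructor
      · have := ht.1; rw [hu] at this
        have := le_trans (le_max_right a (t₀ - δ/2)) this
        linarith
      · have := ht.2; rw [hv] at this
        have := le_trans this (min_le_right b (t₀ + δ/2))
        linarith
    exact (hδ h2 h1).le
  have hi1 : IntervalIntegrable f volume a u :=
    ContinuousOn.intervalIntegrable
      (by rw [uIcc_of_le hau]; exact hf.mono (Icc_subset_Icc le_rfl (le_trans huv.le hvb)))
  have hi2 : IntervalIntegrable f volume u v :=
    ContinuousOn.intervalIntegrable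
      (by rw [uIcc_of_le huv.le]; exact hf.mono (Icc_subset_Icc hau hvb))
  have hi3 : IntervalIntegrable f volume v b :=
    ContinuousOn.intervalIntegrable
      (by rw [uIcc_of_le hvb]; exact hf.mono (Icc_subset_Icc (le_trans hau huv.le) le_rfl))
  have hsplit : ∫ t in a..b, f t = (∫ t in a..u, f t) + ((∫ t in u..v, f t) + ∫ t in v..b, f t) := by
    rw [integral_add_adjacent_intervals hi2 hi3, integral_add_adjacent_intervals hi1 (hi2.trans hi3)]
  have h1 : 0 ≤ ∫ t in a..u, f t :=
    intervalIntegral.integral_nonneg hau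
      (fun t ht => h0 t ⟨ht.1, le_trans ht.2 (le_trans huv.le hvb)⟩)
  have h3 : 0 ≤ ∫ t in v..b, f t :=
    intervalIntegral.integral_nonneg hvb
      (fun t ht => h0 t ⟨le_trans hau (le_trans huv.le ht.1), ht.2⟩)
  have h2 : (v - u) * (f t₀ / 2) ≤ ∫ t in u..v, f t := by
    have := intervalIntegral.integral_mono_on huv.le
      (_root_.intervalIntegrable_const (c := f t₀ / 2)) hi2 hmid
    rwa [intervalIntegral.integral_const, smul_eq_mul] at this
  have h2' : 0 < (v - u) * (f t₀ / 2) := by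
    apply mul_pos (by linarith) (by linarith)
  linarith


structure Setup where
  hm : ℝ
  hhm : 0 < hm
  Um : ℝ → ℝ
  Um' : ℝ → ℝ
  Um'' : ℝ → ℝ
  hUm : ∀ x ∈ Icc (-hm) (0:ℝ), HasDerivAt Um (Um' x) x
  hUm' : ∀ x ∈ Icc (-hm) (0:ℝ), HasDerivAt Um' (Um'' x) x
  hUmc : ContinuousOn Um'' (Icc (-hm) (0:ℝ))
  c : ℝ
  hc : ∀ x ∈ Icc (-hm) (0:ℝ), Um x ≠ c
  y : ℝ → ℝ → ℝ
  y' : ℝ → ℝ → ℝ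
  y'' : ℝ → ℝ → ℝ
  hsol : ∀ K ∈ Ici (0:ℝ),
      (∀ x ∈ Icc (-hm) (0:ℝ),
        HasDerivAt (y K) (y' K x) x ∧ HasDerivAt (y' K) (y'' K x) x ∧
        -y'' K x + (K + Um'' x / (Um x - c)) * y K x = 0) ∧
      y K (-hm) = 0 ∧ y' K (-hm) = 1
  z : ℝ → ℝ → ℝ
  hz : ∀ K ∈ Ici (0:ℝ), ∀ x ∈ Icc (-hm) (0:ℝ),
      HasDerivWithinAt (fun K' => y K' x) (z K x) (Ici 0) K

namespace Setup

variable (S : Setup)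

/-- The potential. -/
noncomputable def q (x : ℝ) : ℝ := S.Um'' x / (S.Um x - S.c)

lemma hy (K : ℝ) (hK : K ∈ Ici (0:ℝ)) {x : ℝ} (hx : x ∈ Icc (-S.hm) (0:ℝ)) :
    HasDerivAt (S.y K) (S.y' K x) x := ((S.hsol K hK).1 x hx).1

lemma hy' (K : ℝ) (hK : K ∈ Ici (0:ℝ)) {x : ℝ} (hx : x ∈ Icc (-S.hm) (0:ℝ)) :
    HasDerivAt (S.y' K) (S.y'' K x) x := ((S.hsol K hK).1 x hx).2.1

lemma heq (K : ℝ) (hK : K ∈ Ici (0:ℝ)) {x : ℝ} (hx : x ∈ Icc (-S.hm) (0:ℝ)) :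
    S.y'' K x = (K + S.q x) * S.y K x := by
  have h := ((S.hsol K hK).1 x hx).2.2
  unfold q; linarith

lemma hinit (K : ℝ) (hK : K ∈ Ici (0:ℝ)) : S.y K (-S.hm) = 0 := (S.hsol K hK).2.1

lemma hinit' (K : ℝ) (hK : K ∈ Ici (0:ℝ)) : S.y' K (-S.hm) = 1 := (S.hsol K hK).2.2

lemma conty (K : ℝ) (hK : K ∈ Ici (0:ℝ)) : ContinuousOn (S.y K) (Icc (-S.hm) 0) :=
  fun x hx => ((S.hy K hK hx).continuousAt).continuousWithinAt

lemma conty' (K : ℝ) (hK : K ∈ Ici (0:ℝ)) : ContinuousOn (S.y' K) (Icc (-S.hm) 0) :=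
  fun x hx => ((S.hy' K hK hx).continuousAt).continuousWithinAt

lemma contq : ContinuousOn S.q (Icc (-S.hm) 0) := by
  have hU : ContinuousOn S.Um (Icc (-S.hm) 0) :=
    fun x hx => ((S.hUm x hx).continuousAt).continuousWithinAt
  exact S.hUmc.div (hU.sub continuousOn_const) (fun x hx => sub_ne_zero.2 (S.hc x hx))

lemma exists_qbound : ∃ Q : ℝ, 0 ≤ Q ∧ ∀ x ∈ Icc (-S.hm) (0:ℝ), |S.q x| ≤ Q := by
  obtain ⟨C, hC⟩ := (isCompact_Icc).exists_bound_of_continuousOn S.contq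
  exact ⟨max C 0, le_max_right _ _, fun x hx => (hC x hx).trans (le_max_left _ _)⟩

lemma ybound (Q L K : ℝ) (hQ : ∀ x ∈ Icc (-S.hm) (0:ℝ), |S.q x| ≤ Q)
    (hK : K ∈ Ici (0:ℝ)) (hL1 : 1 ≤ L) (hL2 : K + Q ≤ L) :
    ∀ x ∈ Icc (-S.hm) (0:ℝ), |S.y K x| ≤ exp (L * S.hm) ∧ |S.y' K x| ≤ exp (L * S.hm) := by
  have hL0 : 0 < L := lt_of_lt_of_le one_pos hL1
  have key : ∀ x ∈ Icc (-S.hm) (0:ℝ),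
      ‖((S.y K x, S.y' K x) : ℝ × ℝ)‖ ≤ gronwallBound 1 L 0 (x - (-S.hm)) := by
    apply norm_le_gronwallBound_of_norm_deriv_right_le (f' := fun t => (S.y' K t, S.y'' K t))
    · exact (S.conty K hK).prodMk (S.conty' K hK)
    · intro t ht
      exact ((S.hy K hK (Ico_subset_Icc_self ht)).prodMk
        (S.hy' K hK (Ico_subset_Icc_self ht))).hasDerivWithinAt
    · rw [S.hinit K hK, S.hinit' K hK, Prod.norm_def]
      simp
    · intro t ht
      have htI := Ico_subset_Icc_self ht
      rw [Prod.norm_def, Prod.norm_def]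
      simp only [Real.norm_eq_abs, add_zero]
      have h1 : |S.y' K t| ≤ L * max |S.y K t| |S.y' K t| := by
        calc |S.y' K t| ≤ max |S.y K t| |S.y' K t| := le_max_right _ _
        _ ≤ L * max |S.y K t| |S.y' K t| := by nlinarith [abs_nonneg (S.y K t), abs_nonneg (S.y' K t), le_max_left |S.y K t| |S.y' K t|]
      have h2 : |S.y'' K t| ≤ L * max |S.y K t| |S.y' K t| := by
        rw [S.heq K hK htI, abs_mul]
        have hq := hQ t htI
        have : |K + S.q t| ≤ L := by
          calc |K + S.q t| ≤ |K| + |S.q t| := abs_add_le _ _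
          _ ≤ K + Q := by rw [abs_of_nonneg hK]; linarith
          _ ≤ L := hL2
        calc |K + S.q t| * |S.y K t| ≤ L * |S.y K t| := by
              apply mul_le_mul_of_nonneg_right this (abs_nonneg _)
        _ ≤ L * max |S.y K t| |S.y' K t| :=
              mul_le_mul_of_nonneg_left (le_max_left _ _) hL0.le
      exact max_le h1 h2
  intro x hx
  have := key x hx
  rw [gronwallBound_ε0] at this
  have hle : (1:ℝ) * exp (L * (x - -S.hm)) ≤ exp (L * S.hm) := by
    rw [one_mul]
    apply exp_le_exp.2
    have : x - -S.hm ≤ S.hm := by cases hx with | intro h1 h2 => linarith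
    nlinarith
  rw [Prod.norm_def] at this
  simp only [Real.norm_eq_abs] at this
  constructor
  · exact le_trans (le_trans (le_max_left _ _) this) hle
  · exact le_trans (le_trans (le_max_right _ _) this) hle

lemma ydiff (Q L K K' : ℝ) (hQ : ∀ x ∈ Icc (-S.hm) (0:ℝ), |S.q x| ≤ Q)
    (hK : K ∈ Ici (0:ℝ)) (hK' : K' ∈ Ici (0:ℝ)) (hL1 : 1 ≤ L)
    (hL2 : K + Q ≤ L) (hL2' : K' + Q ≤ L) :
    ∀ x ∈ Icc (-S.hm) (0:ℝ),
      |S.y K' x - S.y K x| ≤ |K' - K| * (exp (L * S.hm) * exp (L * S.hm)) := by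
  have hL0 : 0 < L := lt_of_lt_of_le one_pos hL1
  set B := exp (L * S.hm) with hB
  have hB1 : 1 ≤ B := by
    rw [hB]; rw [show (1:ℝ) = exp 0 by simp]; exact exp_le_exp.2 (mul_nonneg (le_trans zero_le_one hL1) S.hhm.le)
  have hB0 : 0 < B := lt_of_lt_of_le one_pos hB1
  set ε := |K' - K| * B with hε
  have hε0 : 0 ≤ ε := by positivity
  have key : ∀ x ∈ Icc (-S.hm) (0:ℝ),
      ‖((S.y K' x - S.y K x, S.y' K' x - S.y' K x) : ℝ × ℝ)‖ ≤
        gronwallBound 0 L ε (x - (-S.hm)) := by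
    apply norm_le_gronwallBound_of_norm_deriv_right_le
      (f' := fun t => (S.y' K' t - S.y' K t, S.y'' K' t - S.y'' K t))
    · exact ((S.conty K' hK').sub (S.conty K hK)).prodMk ((S.conty' K' hK').sub (S.conty' K hK))
    · intro t ht
      exact (((S.hy K' hK' (Ico_subset_Icc_self ht)).sub (S.hy K hK (Ico_subset_Icc_self ht))).prodMk
        ((S.hy' K' hK' (Ico_subset_Icc_self ht)).sub
          (S.hy' K hK (Ico_subset_Icc_self ht)))).hasDerivWithinAt
    · rw [S.hinit K hK, S.hinit' K hK, S.hinit K' hK', S.hinit' K' hK', Prod.norm_def]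
      simp
    · intro t ht
      have htI := Ico_subset_Icc_self ht
      rw [Prod.norm_def, Prod.norm_def]
      simp only [Real.norm_eq_abs]
      set M := max |S.y K' t - S.y K t| |S.y' K' t - S.y' K t| with hM
      have hM0 : 0 ≤ M := le_trans (abs_nonneg _) (le_max_left _ _)
      have h1 : |S.y' K' t - S.y' K t| ≤ L * M + ε := by
        have : |S.y' K' t - S.y' K t| ≤ M := le_max_right _ _
        nlinarith
      have h2 : |S.y'' K' t - S.y'' K t| ≤ L * M + ε := by
        rw [S.heq K hK htI, S.heq K' hK' htI]
        have hid : (K' + S.q t) * S.y K' t - (K + S.q t) * S.y K t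
            = (K' + S.q t) * (S.y K' t - S.y K t) + (K' - K) * S.y K t := by ring
        rw [hid]
        have hq := hQ t htI
        have hyb := (S.ybound Q L K hQ hK hL1 hL2 t htI).1
        have hcoef : |K' + S.q t| ≤ L := by
          calc |K' + S.q t| ≤ |K'| + |S.q t| := abs_add_le _ _
          _ ≤ K' + Q := by rw [abs_of_nonneg hK']; linarith
          _ ≤ L := hL2'
        calc |(K' + S.q t) * (S.y K' t - S.y K t) + (K' - K) * S.y K t|
            ≤ |(K' + S.q t) * (S.y K' t - S.y K t)| + |(K' - K) * S.y K t| := abs_add_le _ _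
        _ = |K' + S.q t| * |S.y K' t - S.y K t| + |K' - K| * |S.y K t| := by
            rw [abs_mul, abs_mul]
        _ ≤ L * M + |K' - K| * B := by
            have e1 : |K' + S.q t| * |S.y K' t - S.y K t| ≤ L * M := by
              apply mul_le_mul hcoef (le_max_left _ _) (abs_nonneg _) hL0.le
            have e2 : |K' - K| * |S.y K t| ≤ |K' - K| * B :=
              mul_le_mul_of_nonneg_left hyb (abs_nonneg _)
            linarith
      exact max_le h1 h2
  intro x hx
  have h := key x hx
  rw [gronwallBound_of_K_ne_0 hL0.ne'] at h
  simp only [zero_mul, zero_add] at h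
  have hfin : ε / L * (exp (L * (x - -S.hm)) - 1) ≤ ε * B := by
    have hx1 : exp (L * (x - -S.hm)) - 1 ≤ B := by
      rw [hB]
      have : L * (x - -S.hm) ≤ L * S.hm := by
        apply mul_le_mul_of_nonneg_left _ hL0.le
        cases hx with | intro h1 h2 => linarith
      nlinarith [exp_le_exp.2 this, exp_pos (L * (x - -S.hm))]
    have hεL : ε / L ≤ ε := by
      rw [div_le_iff₀ hL0]; nlinarith
    have h0 : 0 ≤ exp (L * (x - -S.hm)) - 1 := by
      have : (1:ℝ) = exp 0 := by simp
      rw [this]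
      have : (0:ℝ) ≤ L * (x - -S.hm) := by
        apply mul_nonneg hL0.le; cases hx with | intro h1 h2 => linarith
      nlinarith [exp_le_exp.2 this]
    calc ε / L * (exp (L * (x - -S.hm)) - 1) ≤ ε * (exp (L * (x - -S.hm)) - 1) := by
          apply mul_le_mul_of_nonneg_right hεL h0
    _ ≤ ε * B := mul_le_mul_of_nonneg_left hx1 hε0
  rw [Prod.norm_def] at h
  simp only [Real.norm_eq_abs] at h
  calc |S.y K' x - S.y K x| ≤ _ := le_max_left _ |S.y' K' x - S.y' K x|
  _ ≤ ε / L * (exp (L * (x - -S.hm)) - 1) := h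
  _ ≤ ε * B := hfin
  _ = |K' - K| * (B * B) := by rw [hε]; ring

lemma wronskian (K K' : ℝ) (hK : K ∈ Ici (0:ℝ)) (hK' : K' ∈ Ici (0:ℝ))
    {x : ℝ} (hx : x ∈ Icc (-S.hm) (0:ℝ)) :
    S.y' K' x * S.y K x - S.y K' x * S.y' K x
      = (K' - K) * ∫ t in (-S.hm)..x, S.y K t * S.y K' t := by
  have hsub : Icc (-S.hm) x ⊆ Icc (-S.hm) 0 := Icc_subset_Icc le_rfl hx.2
  have huI : uIcc (-S.hm) x = Icc (-S.hm) x := uIcc_of_le hx.1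
  have hder : ∀ t ∈ uIcc (-S.hm) x,
      HasDerivAt (fun u => S.y' K' u * S.y K u - S.y K' u * S.y' K u)
        ((K' - K) * (S.y K t * S.y K' t)) t := by
    intro t ht
    rw [huI] at ht
    have ht' := hsub ht
    have h := ((S.hy' K' hK' ht').mul (S.hy K hK ht')).sub
      ((S.hy K' hK' ht').mul (S.hy' K hK ht'))
    refine h.congr_deriv ?_
    rw [S.heq K hK ht', S.heq K' hK' ht']
    ring
  have hcont : ContinuousOn (fun t => (K' - K) * (S.y K t * S.y K' t)) (uIcc (-S.hm) x) := by
    rw [huI]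
    exact continuousOn_const.mul (((S.conty K hK).mono hsub).mul ((S.conty K' hK').mono hsub))
  have hint : IntervalIntegrable (fun t => (K' - K) * (S.y K t * S.y K' t)) volume (-S.hm) x :=
    hcont.intervalIntegrable
  have hftc := integral_eq_sub_of_hasDerivAt hder hint
  rw [S.hinit K hK, S.hinit K' hK'] at hftc
  rw [intervalIntegral.integral_const_mul] at hftc
  rw [hftc]; ring


lemma yne (K : ℝ) (hK : K ∈ Ici (0:ℝ)) :
    ∀ x₀ ∈ Ioc (-S.hm) (0:ℝ), S.y K x₀ ≠ 0 := by
  intro x₀ hx₀ h0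
  have hsub : Icc (-S.hm) x₀ ⊆ Icc (-S.hm) 0 := Icc_subset_Icc le_rfl hx₀.2
  have hne : ∀ t ∈ Icc (-S.hm) (0:ℝ), S.Um t - S.c ≠ 0 :=
    fun t ht => sub_ne_zero.2 (S.hc t ht)
  set φ : ℝ → ℝ := fun t => S.y K t / (S.Um t - S.c) with hφ
  set φ' : ℝ → ℝ :=
    fun t => (S.y' K t * (S.Um t - S.c) - S.y K t * S.Um' t) / (S.Um t - S.c)^2 with hφ'
  set ψ : ℝ → ℝ := fun t => S.y' K t * (S.Um t - S.c) - S.y K t * S.Um' t with hψ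
  set ψ' : ℝ → ℝ := fun t => K * S.y K t * (S.Um t - S.c) with hψ'
  have hUc : ∀ t ∈ Icc (-S.hm) (0:ℝ), HasDerivAt (fun u => S.Um u - S.c) (S.Um' t) t :=
    fun t ht => (S.hUm t ht).sub_const _
  have hdφ : ∀ t ∈ Icc (-S.hm) (0:ℝ), HasDerivAt φ (φ' t) t := by
    intro t ht
    exact (S.hy K hK ht).div (hUc t ht) (hne t ht)
  have hdψ : ∀ t ∈ Icc (-S.hm) (0:ℝ), HasDerivAt ψ (ψ' t) t := by
    intro t ht
    have h := ((S.hy' K hK ht).mul (hUc t ht)).sub ((S.hy K hK ht).mul (S.hUm' t ht))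
    refine h.congr_deriv ?_
    rw [hψ', S.heq K hK ht]
    unfold q
    field_simp [hne t ht]
    ring
  have hcφ : ContinuousOn φ (Icc (-S.hm) (0:ℝ)) :=
    fun t ht => ((hdφ t ht).continuousAt).continuousWithinAt
  have hcψ : ContinuousOn ψ (Icc (-S.hm) (0:ℝ)) :=
    fun t ht => ((hdψ t ht).continuousAt).continuousWithinAt
  have hcU : ContinuousOn (fun t => S.Um t - S.c) (Icc (-S.hm) (0:ℝ)) :=
    fun t ht => ((hUc t ht).continuousAt).continuousWithinAt
  have hcφ' : ContinuousOn φ' (Icc (-S.hm) (0:ℝ)) :=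
    hcψ.div (hcU.pow 2) (fun t ht => pow_ne_zero _ (hne t ht))
  have hcψ' : ContinuousOn ψ' (Icc (-S.hm) (0:ℝ)) :=
    (continuousOn_const.mul (S.conty K hK)).mul hcU
  have huI : uIcc (-S.hm) x₀ = Icc (-S.hm) x₀ := uIcc_of_le hx₀.1.le
  have hiφ' : IntervalIntegrable φ' volume (-S.hm) x₀ :=
    ContinuousOn.intervalIntegrable (by rw [huI]; exact hcφ'.mono hsub)
  have hiψ' : IntervalIntegrable ψ' volume (-S.hm) x₀ :=
    ContinuousOn.intervalIntegrable (by rw [huI]; exact hcψ'.mono hsub)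
  have hibp := integral_mul_deriv_eq_deriv_mul
    (u := φ) (v := ψ) (u' := φ') (v' := ψ') (a := -S.hm) (b := x₀)
    (fun t ht => hdφ t (hsub (huI ▸ ht))) (fun t ht => hdψ t (hsub (huI ▸ ht))) hiφ' hiψ'
  have hφ0 : φ (-S.hm) = 0 := by rw [hφ]; simp [S.hinit K hK]
  have hφx₀ : φ x₀ = 0 := by rw [hφ]; simp [h0]
  rw [hφ0, hφx₀] at hibp
  simp only [mul_zero, zero_mul, zero_sub] at hibp
  have hnn1 : ∀ t ∈ Icc (-S.hm) x₀, 0 ≤ φ t * ψ' t := by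
    intro t ht
    have ht' := hsub ht
    have he : φ t * ψ' t = K * (S.y K t)^2 := by
      rw [hφ, hψ']
      field_simp [hne t ht']
    rw [he]
    exact mul_nonneg hK (sq_nonneg _)
  have hnn2 : ∀ t ∈ Icc (-S.hm) x₀, 0 ≤ φ' t * ψ t := by
    intro t ht
    have ht' := hsub ht
    have he : φ' t * ψ t = (ψ t)^2 / (S.Um t - S.c)^2 := by
      rw [hφ', hψ]
      ring
    rw [he]
    positivity
  have hI1 : 0 ≤ ∫ t in (-S.hm)..x₀, φ t * ψ' t :=
    intervalIntegral.integral_nonneg hx₀.1.le hnn1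
  have hI2 : 0 ≤ ∫ t in (-S.hm)..x₀, φ' t * ψ t :=
    intervalIntegral.integral_nonneg hx₀.1.le hnn2
  have hI2z : ∫ t in (-S.hm)..x₀, φ' t * ψ t = 0 := by linarith
  -- deduce φ' vanishes identically on [-hm, x₀]
  have hφ'0 : ∀ t ∈ Icc (-S.hm) x₀, φ' t = 0 := by
    intro t ht
    by_contra hne'
    have hψne : ψ t ≠ 0 := by
      intro hψ0
      apply hne'
      have hr : φ' t = ψ t / (S.Um t - S.c)^2 := rfl
      rw [hr, hψ0, zero_div]
    have hpos : 0 < φ' t * ψ t := by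
      have he : φ' t * ψ t = (ψ t)^2 / (S.Um t - S.c)^2 := by
        rw [hφ', hψ]; ring
      rw [he]
      have h1 : 0 < (ψ t)^2 := (sq_nonneg (ψ t)).lt_of_ne (Ne.symm (pow_ne_zero 2 hψne))
      have h2 : 0 < (S.Um t - S.c)^2 :=
        (sq_nonneg _).lt_of_ne (Ne.symm (pow_ne_zero 2 (hne t (hsub ht))))
      exact div_pos h1 h2
    have := integral_pos_of_nonneg_of_pos hx₀.1
      ((hcφ'.mono hsub).mul (hcψ.mono hsub)) hnn2 ht hpos
    simp only [Pi.mul_apply] at this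
    linarith [hI2z]
  have hconst := constant_of_has_deriv_right_zero
    (f := φ) (a := -S.hm) (b := x₀) (hcφ.mono hsub)
    (fun t ht => by
      have h := (hdφ t (hsub (Ico_subset_Icc_self ht))).hasDerivWithinAt (s := Ici t)
      rwa [hφ'0 t (Ico_subset_Icc_self ht)] at h)
  have hyzero : ∀ t ∈ Icc (-S.hm) x₀, S.y K t = 0 := by
    intro t ht
    have h := hconst t ht
    rw [hφ0] at h
    rw [hφ] at h
    simp only at h
    exact (div_eq_zero_iff.1 h).resolve_right (hne t (hsub ht))
  -- contradiction with y'(-hm) = 1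
  have hmem : (-S.hm) ∈ Icc (-S.hm) x₀ := ⟨le_refl _, hx₀.1.le⟩
  have h1 : HasDerivWithinAt (S.y K) 1 (Icc (-S.hm) x₀) (-S.hm) := by
    have := (S.hy K hK (hsub hmem)).hasDerivWithinAt (s := Icc (-S.hm) x₀)
    rwa [S.hinit' K hK] at this
  have h2 : HasDerivWithinAt (S.y K) 0 (Icc (-S.hm) x₀) (-S.hm) := by
    apply (hasDerivWithinAt_const (-S.hm) (Icc (-S.hm) x₀) (0:ℝ)).congr
    · intro t ht; rw [hyzero t ht]
    · rw [hyzero (-S.hm) hmem]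
  have hu : UniqueDiffWithinAt ℝ (Icc (-S.hm) x₀) (-S.hm) :=
    (uniqueDiffOn_Icc hx₀.1) (-S.hm) hmem
  have e1 := h1.derivWithin hu
  have e2 := h2.derivWithin hu
  rw [e1] at e2
  exact one_ne_zero e2

lemma ypos (K : ℝ) (hK : K ∈ Ici (0:ℝ)) :
    ∀ x ∈ Ioc (-S.hm) (0:ℝ), 0 < S.y K x := by
  intro x₁ hx₁
  rcases lt_or_gt_of_ne (S.yne K hK x₁ hx₁) with hneg | hpos
  · exfalso
    -- find a point close to -hm where y is positive
    have hd := S.hy K hK (show (-S.hm) ∈ Icc (-S.hm) (0:ℝ) from ⟨le_refl _, by linarith [S.hhm]⟩)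
    rw [S.hinit' K hK] at hd
    rw [hasDerivAt_iff_tendsto_slope] at hd
    have hd' : Tendsto (slope (S.y K) (-S.hm)) (𝓝[>] (-S.hm)) (𝓝 1) :=
      hd.mono_left (nhdsWithin_mono _ (fun t ht => ne_of_gt ht))
    have hev1 : ∀ᶠ t in 𝓝[>] (-S.hm), 0 < slope (S.y K) (-S.hm) t :=
      hd'.eventually (eventually_gt_nhds one_pos)
    have hev2 : ∀ᶠ t in 𝓝[>] (-S.hm), t < x₁ :=
      eventually_nhdsWithin_of_eventually_nhds (eventually_lt_nhds hx₁.1)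
    have hev3 : ∀ᶠ t in 𝓝[>] (-S.hm), -S.hm < t := eventually_mem_nhdsWithin
    obtain ⟨x₂, hs, hx₂lt, hx₂gt⟩ := (hev1.and (hev2.and hev3)).exists
    have hypos : 0 < S.y K x₂ := by
      rw [slope_def_field, S.hinit K hK, sub_zero] at hs
      have hden : 0 < x₂ - -S.hm := by linarith
      have := mul_pos hs hden
      rwa [div_mul_cancel₀ _ (ne_of_gt hden)] at this
    -- IVT gives a zero of y in (x₂, x₁), contradiction
    have hcont : ContinuousOn (S.y K) (Icc x₂ x₁) :=
      (S.conty K hK).mono (Icc_subset_Icc (by linarith) hx₁.2)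
    have hIvt := intermediate_value_Ioo' (le_of_lt hx₂lt) hcont
    have h0mem : (0:ℝ) ∈ Ioo (S.y K x₁) (S.y K x₂) := ⟨hneg, hypos⟩
    obtain ⟨ξ, hξ, hξ0⟩ := hIvt h0mem
    exact S.yne K hK ξ ⟨by linarith [hξ.1], by linarith [hξ.2, hx₁.2]⟩ hξ0
  · exact hpos

lemma y0pos (K : ℝ) (hK : K ∈ Ici (0:ℝ)) : 0 < S.y K 0 :=
  S.ypos K hK 0 ⟨by linarith [S.hhm], le_refl 0⟩

lemma lneBot (K : ℝ) (hK : K ∈ Ici (0:ℝ)) : (𝓝[Ici (0:ℝ) \ {K}] K).NeBot := by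
  have hsub : Ioi K ⊆ Ici (0:ℝ) \ {K} := by
    intro t ht
    exact ⟨mem_Ici.2 (le_trans (mem_Ici.1 hK) (le_of_lt (mem_Ioi.1 ht))), ne_of_gt (mem_Ioi.1 ht)⟩
  exact (nhdsGT_neBot K).mono (nhdsWithin_mono _ hsub)

lemma tendsto_yx (K : ℝ) (hK : K ∈ Ici (0:ℝ)) {x : ℝ} (hx : x ∈ Icc (-S.hm) (0:ℝ)) :
    Tendsto (fun K' => S.y K' x) (𝓝[Ici (0:ℝ) \ {K}] K) (𝓝 (S.y K x)) :=
  ((S.hz K hK x hx).continuousWithinAt).mono_left (nhdsWithin_mono _ diff_subset)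

lemma tendsto_slope_yx (K : ℝ) (hK : K ∈ Ici (0:ℝ)) {x : ℝ} (hx : x ∈ Icc (-S.hm) (0:ℝ)) :
    Tendsto (fun K' => (S.y K' x - S.y K x) / (K' - K)) (𝓝[Ici (0:ℝ) \ {K}] K)
      (𝓝 (S.z K x)) := by
  have h := (hasDerivWithinAt_iff_tendsto_slope).1 (S.hz K hK x hx)
  have hset : (Ici (0:ℝ)) \ {K} = Ici (0:ℝ) \ {K} := rfl
  apply h.congr
  intro K'
  rw [slope_def_field]

lemma evsmall (K : ℝ) : ∀ᶠ K' in 𝓝[Ici (0:ℝ) \ {K}] K, |K' - K| ≤ 1 := by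
  apply eventually_nhdsWithin_of_eventually_nhds
  have hball : Metric.ball K 1 ∈ 𝓝 K := Metric.ball_mem_nhds K one_pos
  filter_upwards [hball] with t ht
  rw [Metric.mem_ball, Real.dist_eq] at ht
  exact ht.le

/-- First derivative candidate. -/
noncomputable def Gp (K : ℝ) : ℝ := (∫ t in (-S.hm)..0, (S.y K t)^2) / (S.y K 0)^2

lemma tendsto_num (Q : ℝ) (hQ0 : 0 ≤ Q) (hQ : ∀ x ∈ Icc (-S.hm) (0:ℝ), |S.q x| ≤ Q)
    (K : ℝ) (hK : K ∈ Ici (0:ℝ)) :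
    Tendsto (fun K' => ∫ t in (-S.hm)..0, S.y K t * S.y K' t) (𝓝[Ici (0:ℝ) \ {K}] K)
      (𝓝 (∫ t in (-S.hm)..0, (S.y K t)^2)) := by
  set L := max 1 (K + 1 + Q) with hL
  have hL1 : 1 ≤ L := le_max_left _ _
  have hL2 : K + Q ≤ L := le_trans (by linarith) (le_max_right _ _)
  set B := exp (L * S.hm) with hB
  have hIoc : Ι (-S.hm) (0:ℝ) = Ioc (-S.hm) 0 := uIoc_of_le (by linarith [S.hhm])
  have hIsub : Ioc (-S.hm) (0:ℝ) ⊆ Icc (-S.hm) 0 := Ioc_subset_Icc_self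
  have hsq : (fun t => (S.y K t)^2) = fun t => S.y K t * S.y K t := by
    funext t; ring
  rw [hsq]
  apply intervalIntegral.tendsto_integral_filter_of_dominated_convergence
    (bound := fun _ => B * B)
  · filter_upwards [eventually_mem_nhdsWithin] with K' hK'
    apply ContinuousOn.aestronglyMeasurable _ measurableSet_uIoc
    rw [hIoc]
    exact (((S.conty K hK).mono hIsub).mul ((S.conty K' hK'.1).mono hIsub))
  · filter_upwards [eventually_mem_nhdsWithin, evsmall K] with K' hK' hd
    apply Eventually.of_forall
    intro x hx
    rw [hIoc] at hx
    have hx' := hIsub hx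
    have h1 := (S.ybound Q L K hQ hK hL1 hL2 x hx').1
    have h2 := (S.ybound Q L K' hQ hK'.1 hL1 (by
      have h3 : K' ≤ K + 1 := by
        rcases abs_le.1 hd with ⟨hlo, hhi⟩; linarith
      have h4 := le_max_right (1:ℝ) (K + 1 + Q)
      rw [← hL] at h4
      linarith) x hx').1
    rw [Real.norm_eq_abs, abs_mul]
    exact mul_le_mul h1 h2 (abs_nonneg _) (le_trans (abs_nonneg _) h1)
  · exact intervalIntegrable_const
  · apply Eventually.of_forall
    intro x hx
    rw [hIoc] at hx
    exact tendsto_const_nhds.mul (S.tendsto_yx K hK (hIsub hx))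

lemma hasDeriv_G (Q : ℝ) (hQ0 : 0 ≤ Q) (hQ : ∀ x ∈ Icc (-S.hm) (0:ℝ), |S.q x| ≤ Q)
    (K : ℝ) (hK : K ∈ Ici (0:ℝ)) :
    HasDerivWithinAt (fun K' => S.y' K' 0 / S.y K' 0) (S.Gp K) (Ici 0) K := by
  rw [hasDerivWithinAt_iff_tendsto_slope]
  have hne0 : S.y K 0 ≠ 0 := (S.y0pos K hK).ne'
  have h0mem : (0:ℝ) ∈ Icc (-S.hm) (0:ℝ) := ⟨by linarith [S.hhm], le_refl 0⟩
  have hTend : Tendsto (fun K' => (∫ t in (-S.hm)..0, S.y K t * S.y K' t) / (S.y K 0 * S.y K' 0))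
      (𝓝[Ici (0:ℝ) \ {K}] K) (𝓝 (S.Gp K)) := by
    have hden : Tendsto (fun K' => S.y K 0 * S.y K' 0) (𝓝[Ici (0:ℝ) \ {K}] K)
        (𝓝 (S.y K 0 * S.y K 0)) := tendsto_const_nhds.mul (S.tendsto_yx K hK h0mem)
    have h := (S.tendsto_num Q hQ0 hQ K hK).div hden (by
      exact mul_ne_zero hne0 hne0)
    have : (∫ t in (-S.hm)..0, (S.y K t)^2) / (S.y K 0 * S.y K 0) = S.Gp K := by
      rw [Gp, sq]
    rwa [this] at h
  apply hTend.congr'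
  filter_upwards [eventually_mem_nhdsWithin] with K' hK'
  obtain ⟨hK'0, hK'ne⟩ := hK'
  have hK'ne' : K' ≠ K := by simpa using hK'ne
  have hne0' : S.y K' 0 ≠ 0 := (S.y0pos K' hK'0).ne'
  have hW := S.wronskian K K' hK hK'0 h0mem
  have hKK : K' - K ≠ 0 := sub_ne_zero.2 hK'ne'
  rw [slope_def_field, div_sub_div _ _ hne0' hne0, hW, div_div,
    mul_comm (S.y K' 0 * S.y K 0) (K' - K), mul_div_mul_left _ _ hKK,
    mul_comm (S.y K' 0) (S.y K 0)]

lemma tendsto_numx (Q : ℝ) (hQ0 : 0 ≤ Q) (hQ : ∀ x ∈ Icc (-S.hm) (0:ℝ), |S.q x| ≤ Q)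
    (K : ℝ) (hK : K ∈ Ici (0:ℝ)) {b : ℝ} (hb : b ∈ Icc (-S.hm) (0:ℝ)) :
    Tendsto (fun K' => ∫ t in (-S.hm)..b, S.y K t * S.y K' t) (𝓝[Ici (0:ℝ) \ {K}] K)
      (𝓝 (∫ t in (-S.hm)..b, S.y K t * S.y K t)) := by
  set L := max 1 (K + 1 + Q) with hL
  have hL1 : 1 ≤ L := le_max_left _ _
  have hL2 : K + Q ≤ L := le_trans (by linarith) (le_max_right _ _)
  set B := exp (L * S.hm) with hB
  have hIoc : Ι (-S.hm) b = Ioc (-S.hm) b := uIoc_of_le hb.1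
  have hIsub : Ioc (-S.hm) b ⊆ Icc (-S.hm) 0 := fun t ht => ⟨ht.1.le, le_trans ht.2 hb.2⟩
  apply intervalIntegral.tendsto_integral_filter_of_dominated_convergence
    (bound := fun _ => B * B)
  · filter_upwards [eventually_mem_nhdsWithin] with K' hK'
    apply ContinuousOn.aestronglyMeasurable _ measurableSet_uIoc
    rw [hIoc]
    exact (((S.conty K hK).mono hIsub).mul ((S.conty K' hK'.1).mono hIsub))
  · filter_upwards [eventually_mem_nhdsWithin, evsmall K] with K' hK' hd
    apply Eventually.of_forall
    intro x hx
    rw [hIoc] at hx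
    have hx' := hIsub hx
    have h1 := (S.ybound Q L K hQ hK hL1 hL2 x hx').1
    have h2 := (S.ybound Q L K' hQ hK'.1 hL1 (by
      have h3 : K' ≤ K + 1 := by
        rcases abs_le.1 hd with ⟨hlo, hhi⟩; linarith
      have h4 := le_max_right (1:ℝ) (K + 1 + Q)
      rw [← hL] at h4
      linarith) x hx').1
    rw [Real.norm_eq_abs, abs_mul]
    exact mul_le_mul h1 h2 (abs_nonneg _) (le_trans (abs_nonneg _) h1)
  · exact intervalIntegrable_const
  · apply Eventually.of_forall
    intro x hx
    rw [hIoc] at hx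
    exact tendsto_const_nhds.mul (S.tendsto_yx K hK (hIsub hx))

lemma zbound (Q : ℝ) (hQ0 : 0 ≤ Q) (hQ : ∀ x ∈ Icc (-S.hm) (0:ℝ), |S.q x| ≤ Q)
    (K : ℝ) (hK : K ∈ Ici (0:ℝ)) :
    ∀ x ∈ Icc (-S.hm) (0:ℝ), |S.z K x| ≤
      exp (max 1 (K + 1 + Q) * S.hm) * exp (max 1 (K + 1 + Q) * S.hm) := by
  intro x hx
  set L := max 1 (K + 1 + Q) with hL
  have hL1 : 1 ≤ L := le_max_left _ _
  have hL2 : K + Q ≤ L := le_trans (by linarith) (le_max_right _ _)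
  set B := exp (L * S.hm) with hB
  haveI := lneBot K hK
  have hT : Tendsto (fun K' => |(S.y K' x - S.y K x) / (K' - K)|) (𝓝[Ici (0:ℝ) \ {K}] K)
      (𝓝 |S.z K x|) := (S.tendsto_slope_yx K hK hx).abs
  apply le_of_tendsto hT
  filter_upwards [eventually_mem_nhdsWithin, evsmall K] with K' hK' hd
  have hdiff := S.ydiff Q L K K' hQ hK hK'.1 hL1 hL2 (by
    have h3 : K' ≤ K + 1 := by rcases abs_le.1 hd with ⟨hlo, hhi⟩; linarith
    have h4 := le_max_right (1:ℝ) (K + 1 + Q)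
    rw [← hL] at h4
    linarith) x hx
  have hKK : K' - K ≠ 0 := sub_ne_zero.2 (by simpa using hK'.2)
  rw [abs_div]
  rw [div_le_iff₀ (abs_pos.2 hKK)]
  calc |S.y K' x - S.y K x| ≤ |K' - K| * (B * B) := hdiff
  _ = B * B * |K' - K| := by ring

lemma meas_z (K : ℝ) (hK : K ∈ Ici (0:ℝ)) :
    AEStronglyMeasurable (S.z K) (volume.restrict (Ι (-S.hm) (0:ℝ))) := by
  have hIoc : Ι (-S.hm) (0:ℝ) = Ioc (-S.hm) 0 := uIoc_of_le (by linarith [S.hhm])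
  have hIsub : Ioc (-S.hm) (0:ℝ) ⊆ Icc (-S.hm) 0 := Ioc_subset_Icc_self
  set Kn : ℕ → ℝ := fun n => K + 1/(n+1) with hKn
  have hKnmem : ∀ n, Kn n ∈ Ici (0:ℝ) \ {K} := by
    intro n
    have h1 : (0:ℝ) < 1/(n+1) := by positivity
    have h0 : (0:ℝ) ≤ K := hK
    refine ⟨?_, ?_⟩
    · show (0:ℝ) ≤ K + 1/((n:ℝ)+1)
      linarith
    · simp only [mem_singleton_iff]
      show ¬ K + 1/((n:ℝ)+1) = K
      intro h
      nlinarith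
  have hKnT : Tendsto Kn atTop (𝓝[Ici (0:ℝ) \ {K}] K) := by
    rw [tendsto_nhdsWithin_iff]
    constructor
    · have h : Tendsto (fun n : ℕ => 1 / ((n : ℝ) + 1)) atTop (𝓝 0) := tendsto_one_div_add_atTop_nhds_zero_nat
      have h2 : Tendsto (fun _ : ℕ => K) atTop (𝓝 K) := tendsto_const_nhds
      have h3 := h2.add h
      rw [add_zero] at h3
      apply h3.congr
      intro n
      show K + 1/((n:ℝ)+1) = Kn n
      rw [hKn]
    · exact Eventually.of_forall hKnmem
  apply aestronglyMeasurable_of_tendsto_ae (u := atTop)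
    (f := fun n x => (S.y (Kn n) x - S.y K x) / (Kn n - K))
  · intro n
    apply ContinuousOn.aestronglyMeasurable _ measurableSet_uIoc
    rw [hIoc]
    exact (((S.conty (Kn n) (hKnmem n).1).mono hIsub).sub ((S.conty K hK).mono hIsub)).div_const _
  · rw [ae_restrict_iff' measurableSet_uIoc]
    apply Eventually.of_forall
    intro x hx
    rw [hIoc] at hx
    exact (S.tendsto_slope_yx K hK (hIsub hx)).comp hKnT

lemma int_yz (Q : ℝ) (hQ0 : 0 ≤ Q) (hQ : ∀ x ∈ Icc (-S.hm) (0:ℝ), |S.q x| ≤ Q)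
    (K : ℝ) (hK : K ∈ Ici (0:ℝ)) :
    IntervalIntegrable (fun x => S.y K x * S.z K x) volume (-S.hm) 0 := by
  set L := max 1 (K + 1 + Q) with hL
  set B := exp (L * S.hm) with hB
  have hB0 : 0 < B := exp_pos _
  have hIoc : Ι (-S.hm) (0:ℝ) = Ioc (-S.hm) 0 := uIoc_of_le (by linarith [S.hhm])
  have hIsub : Ioc (-S.hm) (0:ℝ) ⊆ Icc (-S.hm) 0 := Ioc_subset_Icc_self
  have hL1 : 1 ≤ L := le_max_left _ _
  have hL2 : K + Q ≤ L := le_trans (by linarith) (le_max_right _ _)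
  rw [intervalIntegrable_iff_integrableOn_Ioc_of_le (by linarith [S.hhm])]
  have hmeas : AEStronglyMeasurable (fun x => S.y K x * S.z K x)
      (volume.restrict (Ioc (-S.hm) (0:ℝ))) := by
    have h1 : AEStronglyMeasurable (S.y K) (volume.restrict (Ioc (-S.hm) (0:ℝ))) :=
      ContinuousOn.aestronglyMeasurable ((S.conty K hK).mono hIsub) measurableSet_Ioc
    have h2 := S.meas_z K hK
    rw [hIoc] at h2
    exact h1.mul h2
  apply Integrable.mono' (g := fun _ => B * (B * B)) (integrable_const _) hmeas
  rw [ae_restrict_iff' measurableSet_Ioc]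
  apply Eventually.of_forall
  intro x hx
  have hx' := hIsub hx
  rw [Real.norm_eq_abs, abs_mul]
  have h1 := (S.ybound Q L K hQ hK hL1 hL2 x hx').1
  have h2 := S.zbound Q hQ0 hQ K hK x hx'
  rw [← hL] at h2
  rw [← hB] at h1 h2
  exact mul_le_mul h1 h2 (abs_nonneg _) hB0.le

lemma int_sq (K : ℝ) (hK : K ∈ Ici (0:ℝ)) :
    IntervalIntegrable (fun t => (S.y K t)^2) volume (-S.hm) 0 :=
  ContinuousOn.intervalIntegrable
    (by rw [uIcc_of_le (by linarith [S.hhm] : -S.hm ≤ (0:ℝ))]; exact (S.conty K hK).pow 2)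

lemma hasDeriv_A (Q : ℝ) (hQ0 : 0 ≤ Q) (hQ : ∀ x ∈ Icc (-S.hm) (0:ℝ), |S.q x| ≤ Q)
    (K : ℝ) (hK : K ∈ Ici (0:ℝ)) :
    HasDerivWithinAt (fun K' => ∫ t in (-S.hm)..0, (S.y K' t)^2)
      (2 * ∫ t in (-S.hm)..0, S.y K t * S.z K t) (Ici 0) K := by
  rw [hasDerivWithinAt_iff_tendsto_slope]
  set L := max 1 (K + 1 + Q) with hL
  have hL1 : 1 ≤ L := le_max_left _ _
  have hL2 : K + Q ≤ L := le_trans (by linarith) (le_max_right _ _)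
  set B := exp (L * S.hm) with hB
  have hB0 : 0 < B := exp_pos _
  have hIoc : Ι (-S.hm) (0:ℝ) = Ioc (-S.hm) 0 := uIoc_of_le (by linarith [S.hhm])
  have hIsub : Ioc (-S.hm) (0:ℝ) ⊆ Icc (-S.hm) 0 := Ioc_subset_Icc_self
  have key : Tendsto (fun K' => ∫ t in (-S.hm)..0, ((S.y K' t)^2 - (S.y K t)^2)/(K' - K))
      (𝓝[Ici (0:ℝ) \ {K}] K) (𝓝 (∫ t in (-S.hm)..0, 2 * (S.y K t * S.z K t))) := by
    apply intervalIntegral.tendsto_integral_filter_of_dominated_convergence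
      (bound := fun _ => (B * B) * (B + B))
    · filter_upwards [eventually_mem_nhdsWithin] with K' hK'
      apply ContinuousOn.aestronglyMeasurable _ measurableSet_uIoc
      rw [hIoc]
      exact ((((S.conty K' hK'.1).mono hIsub).pow 2).sub
        (((S.conty K hK).mono hIsub).pow 2)).div_const _
    · filter_upwards [eventually_mem_nhdsWithin, evsmall K] with K' hK' hd
      apply Eventually.of_forall
      intro x hx
      rw [hIoc] at hx
      have hx' := hIsub hx
      have hK'L : K' + Q ≤ L := by
        have h3 : K' ≤ K + 1 := by rcases abs_le.1 hd with ⟨hlo, hhi⟩; linarith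
        have h4 := le_max_right (1:ℝ) (K + 1 + Q)
        rw [← hL] at h4
        linarith
      have hdiff := S.ydiff Q L K K' hQ hK hK'.1 hL1 hL2 hK'L x hx'
      have h1 := (S.ybound Q L K hQ hK hL1 hL2 x hx').1
      have h2 := (S.ybound Q L K' hQ hK'.1 hL1 hK'L x hx').1
      have hKK : K' - K ≠ 0 := sub_ne_zero.2 (by simpa using hK'.2)
      have he : ((S.y K' x)^2 - (S.y K x)^2)/(K' - K)
          = ((S.y K' x - S.y K x)/(K' - K)) * (S.y K' x + S.y K x) := by
        rw [div_mul_eq_mul_div]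
        congr 1
        ring
      rw [Real.norm_eq_abs, he, abs_mul, abs_div]
      have e1 : |S.y K' x - S.y K x| / |K' - K| ≤ B * B := by
        rw [div_le_iff₀ (abs_pos.2 hKK)]
        calc |S.y K' x - S.y K x| ≤ |K' - K| * (B * B) := hdiff
        _ = B * B * |K' - K| := by ring
      have e2 : |S.y K' x + S.y K x| ≤ B + B := by
        calc |S.y K' x + S.y K x| ≤ |S.y K' x| + |S.y K x| := abs_add_le _ _
        _ ≤ B + B := by rw [← hB] at h1 h2; linarith
      exact mul_le_mul e1 e2 (abs_nonneg _) (by positivity)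
    · exact intervalIntegrable_const
    · apply Eventually.of_forall
      intro x hx
      rw [hIoc] at hx
      have hx' := hIsub hx
      have h := (S.tendsto_slope_yx K hK hx').mul
        ((S.tendsto_yx K hK hx').add (tendsto_const_nhds (x := S.y K x)))
      have hval : S.z K x * (S.y K x + S.y K x) = 2 * (S.y K x * S.z K x) := by ring
      rw [hval] at h
      apply h.congr
      intro K'
      rw [div_mul_eq_mul_div]
      congr 1
      ring
  rw [intervalIntegral.integral_const_mul] at key
  apply key.congr'
  filter_upwards [eventually_mem_nhdsWithin] with K' hK'
  have hKK : K' - K ≠ 0 := sub_ne_zero.2 (by simpa using hK'.2)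
  rw [slope_def_field]
  rw [← intervalIntegral.integral_sub (S.int_sq K' hK'.1) (S.int_sq K hK)]
  rw [← intervalIntegral.integral_div]

/-- Second derivative candidate. -/
noncomputable def Gpp (K : ℝ) : ℝ :=
  2 * (∫ t in (-S.hm)..0, S.y K t * S.z K t) / (S.y K 0)^2
    - (∫ t in (-S.hm)..0, (S.y K t)^2) * (2 * S.z K 0) / (S.y K 0)^3

lemma hasDeriv_Gp (Q : ℝ) (hQ0 : 0 ≤ Q) (hQ : ∀ x ∈ Icc (-S.hm) (0:ℝ), |S.q x| ≤ Q)
    (K : ℝ) (hK : K ∈ Ici (0:ℝ)) :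
    HasDerivWithinAt S.Gp (S.Gpp K) (Ici 0) K := by
  have h0mem : (0:ℝ) ∈ Icc (-S.hm) (0:ℝ) := ⟨by linarith [S.hhm], le_refl 0⟩
  have hne0 : S.y K 0 ≠ 0 := (S.y0pos K hK).ne'
  have hne0' : (S.y K 0)^2 ≠ 0 := pow_ne_zero 2 hne0
  have hB := (((S.hz K hK 0 h0mem).pow 2).inv hne0')
  have h := (S.hasDeriv_A Q hQ0 hQ K hK).mul hB
  have hfun : S.Gp = fun K' => (∫ t in (-S.hm)..0, (S.y K' t)^2) * ((S.y K' 0)^2)⁻¹ := by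
    funext K'
    rw [Gp, div_eq_mul_inv]
  rw [hfun]
  refine h.congr_deriv ?_
  rw [Gpp]
  simp only [Pi.inv_apply, Pi.pow_apply, Nat.cast_ofNat]
  field_simp
  ring

lemma neg_two_int_eq (Q : ℝ) (hQ0 : 0 ≤ Q) (hQ : ∀ x ∈ Icc (-S.hm) (0:ℝ), |S.q x| ≤ Q)
    (K : ℝ) (hK : K ∈ Ici (0:ℝ)) :
    -2 * (∫ x in (-S.hm)..0,
        S.y K x ^ 2 / S.y K 0 ^ 2 * (S.z K 0 / S.y K 0 - S.z K x / S.y K x))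
      = S.Gpp K := by
  have hne0 : S.y K 0 ≠ 0 := (S.y0pos K hK).ne'
  have hpt : ∀ x, S.y K x ^ 2 / S.y K 0 ^ 2 * (S.z K 0 / S.y K 0 - S.z K x / S.y K x)
      = (S.z K 0 / (S.y K 0)^3) * (S.y K x)^2 - (1/(S.y K 0)^2) * (S.y K x * S.z K x) := by
    intro x
    by_cases hyx : S.y K x = 0
    · simp [hyx]
    · field_simp
  rw [intervalIntegral.integral_congr (g := fun x =>
      (S.z K 0 / (S.y K 0)^3) * (S.y K x)^2 - (1/(S.y K 0)^2) * (S.y K x * S.z K x))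
      (fun x _ => hpt x)]
  rw [intervalIntegral.integral_sub ((S.int_sq K hK).const_mul _)
      ((S.int_yz Q hQ0 hQ K hK).const_mul _)]
  rw [intervalIntegral.integral_const_mul, intervalIntegral.integral_const_mul]
  rw [Gpp]
  field_simp
  ring

lemma ratio_pos (Q : ℝ) (hQ0 : 0 ≤ Q) (hQ : ∀ x ∈ Icc (-S.hm) (0:ℝ), |S.q x| ≤ Q)
    (K : ℝ) (hK : K ∈ Ici (0:ℝ)) :
    ∀ a ∈ Ioo (-S.hm) (0:ℝ), 0 < S.z K 0 / S.y K 0 - S.z K a / S.y K a := by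
  intro a ha
  haveI := lneBot K hK
  set L := max 1 (K + 1 + Q) with hL
  have hL1 : 1 ≤ L := le_max_left _ _
  have hL2 : K + Q ≤ L := le_trans (by linarith) (le_max_right _ _)
  set B := exp (L * S.hm) with hB
  have hB0 : 0 < B := exp_pos _
  have h0mem : (0:ℝ) ∈ Icc (-S.hm) (0:ℝ) := ⟨by linarith [S.hhm], le_refl 0⟩
  have hamem : a ∈ Icc (-S.hm) (0:ℝ) := ⟨ha.1.le, ha.2.le⟩
  have hsubIcc : Icc a (0:ℝ) ⊆ Icc (-S.hm) 0 := Icc_subset_Icc ha.1.le le_rfl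
  have hyne_on : ∀ x ∈ Icc a (0:ℝ), S.y K x ≠ 0 :=
    fun x hx => (S.ypos K hK x ⟨lt_of_lt_of_le ha.1 hx.1, hx.2⟩).ne'
  have hne0 : S.y K 0 ≠ 0 := (S.y0pos K hK).ne'
  have hnea : S.y K a ≠ 0 := hyne_on a ⟨le_rfl, ha.2.le⟩
  -- continuity of the primitives
  have hintP : ∀ K', K' ∈ Ici (0:ℝ) →
      IntervalIntegrable (fun t => S.y K t * S.y K' t) volume (-S.hm) 0 := by
    intro K' hK'
    apply ContinuousOn.intervalIntegrable
    rw [uIcc_of_le (by linarith [S.hhm] : -S.hm ≤ (0:ℝ))]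
    exact (S.conty K hK).mul (S.conty K' hK')
  have hcontP : ∀ K', K' ∈ Ici (0:ℝ) →
      ContinuousOn (fun x => ∫ t in (-S.hm)..x, S.y K t * S.y K' t) (Icc (-S.hm) 0) := by
    intro K' hK'
    have h := continuousOn_primitive_interval' (hintP K' hK')
      (by rw [uIcc_of_le (by linarith [S.hhm] : -S.hm ≤ (0:ℝ))]
          exact ⟨le_rfl, by linarith [S.hhm]⟩)
    rwa [uIcc_of_le (by linarith [S.hhm] : -S.hm ≤ (0:ℝ))] at h
  set I : ℝ := ∫ x in a..0, (∫ t in (-S.hm)..x, S.y K t * S.y K t) / (S.y K x)^2 with hI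
  have hIpos : 0 < I := by
    apply intervalIntegral_pos_of_pos_on
    · apply ContinuousOn.intervalIntegrable
      rw [uIcc_of_le ha.2.le]
      exact ((hcontP K hK).mono hsubIcc).div
        (((S.conty K hK).pow 2).mono hsubIcc) (fun x hx => pow_ne_zero 2 (hyne_on x hx))
    · intro x hx
      apply div_pos
      · apply intervalIntegral_pos_of_pos_on
        · apply ContinuousOn.intervalIntegrable
          rw [uIcc_of_le (by linarith [ha.1, hx.1] : -S.hm ≤ x)]
          exact ((S.conty K hK).mono (Icc_subset_Icc le_rfl (by linarith [hx.2]))).mul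
            ((S.conty K hK).mono (Icc_subset_Icc le_rfl (by linarith [hx.2])))
        · intro t ht
          have htIoc : t ∈ Ioc (-S.hm) (0:ℝ) := ⟨ht.1, by linarith [ht.2, hx.2]⟩
          exact mul_pos (S.ypos K hK t htIoc) (S.ypos K hK t htIoc)
        · linarith [ha.1, hx.1]
      · exact pow_pos (S.ypos K hK x ⟨by linarith [ha.1, hx.1], hx.2.le⟩) 2
    · exact ha.2
  have T1 : Tendsto (fun K' => (S.y K' 0 - S.y K 0)/(K' - K)/S.y K 0
      - (S.y K' a - S.y K a)/(K' - K)/S.y K a) (𝓝[Ici (0:ℝ) \ {K}] K)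
      (𝓝 (S.z K 0 / S.y K 0 - S.z K a / S.y K a)) :=
    ((S.tendsto_slope_yx K hK h0mem).div_const (S.y K 0)).sub
      ((S.tendsto_slope_yx K hK hamem).div_const (S.y K a))
  have T2 : Tendsto (fun K' => (S.y K' 0 - S.y K 0)/(K' - K)/S.y K 0
      - (S.y K' a - S.y K a)/(K' - K)/S.y K a) (𝓝[Ici (0:ℝ) \ {K}] K) (𝓝 I) := by
    have hR : Tendsto (fun K' => ∫ x in a..0,
        (∫ t in (-S.hm)..x, S.y K t * S.y K' t) / (S.y K x)^2)
        (𝓝[Ici (0:ℝ) \ {K}] K) (𝓝 I) := by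
      rw [hI]
      apply intervalIntegral.tendsto_integral_filter_of_dominated_convergence
        (bound := fun x => (B * B * S.hm) * ((S.y K x)^2)⁻¹)
      · filter_upwards [eventually_mem_nhdsWithin] with K' hK'
        apply ContinuousOn.aestronglyMeasurable _ measurableSet_uIoc
        rw [uIoc_of_le ha.2.le]
        exact (((hcontP K' hK'.1).mono hsubIcc).div
          (((S.conty K hK).pow 2).mono hsubIcc)
          (fun x hx => pow_ne_zero 2 (hyne_on x hx))).mono Ioc_subset_Icc_self
      · filter_upwards [eventually_mem_nhdsWithin, evsmall K] with K' hK' hd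
        apply Eventually.of_forall
        intro x hx
        rw [uIoc_of_le ha.2.le] at hx
        have hxmem : x ∈ Icc (-S.hm) (0:ℝ) := hsubIcc (Ioc_subset_Icc_self hx)
        have hK'L : K' + Q ≤ L := by
          have h3 : K' ≤ K + 1 := by rcases abs_le.1 hd with ⟨hlo, hhi⟩; linarith
          have h4 := le_max_right (1:ℝ) (K + 1 + Q)
          rw [← hL] at h4
          linarith
        have hbnd : ‖∫ t in (-S.hm)..x, S.y K t * S.y K' t‖ ≤ (B * B) * |x - (-S.hm)| := by
          apply intervalIntegral.norm_integral_le_of_norm_le_const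
          intro t ht
          rw [uIoc_of_le hxmem.1] at ht
          have htmem : t ∈ Icc (-S.hm) (0:ℝ) := ⟨ht.1.le, le_trans ht.2 hxmem.2⟩
          rw [Real.norm_eq_abs, abs_mul]
          exact mul_le_mul ((S.ybound Q L K hQ hK hL1 hL2 t htmem).1)
            ((S.ybound Q L K' hQ hK'.1 hL1 hK'L t htmem).1) (abs_nonneg _)
            (le_trans (abs_nonneg _) ((S.ybound Q L K hQ hK hL1 hL2 t htmem).1))
        have hxm : |x - (-S.hm)| ≤ S.hm := by
          rw [abs_of_nonneg (by linarith [hxmem.1])]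
          linarith [hxmem.2]
        rw [Real.norm_eq_abs, abs_div, div_eq_mul_inv]
        have habs2 : |(S.y K x)^2| = (S.y K x)^2 := abs_of_nonneg (sq_nonneg _)
        rw [habs2]
        apply mul_le_mul_of_nonneg_right _ (inv_nonneg.2 (sq_nonneg _))
        rw [← Real.norm_eq_abs]
        calc ‖∫ t in (-S.hm)..x, S.y K t * S.y K' t‖ ≤ (B * B) * |x - (-S.hm)| := hbnd
        _ ≤ B * B * S.hm := by
            apply mul_le_mul_of_nonneg_left hxm (by positivity)
      · apply ContinuousOn.intervalIntegrable
        rw [uIcc_of_le ha.2.le]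
        apply continuousOn_const.mul
        exact ((((S.conty K hK).pow 2).mono hsubIcc).inv₀
          (fun x hx => pow_ne_zero 2 (hyne_on x hx)))
      · apply Eventually.of_forall
        intro x hx
        rw [uIoc_of_le ha.2.le] at hx
        have hxmem : x ∈ Icc (-S.hm) (0:ℝ) := hsubIcc (Ioc_subset_Icc_self hx)
        exact (S.tendsto_numx Q hQ0 hQ K hK hxmem).div_const _
    apply hR.congr'
    filter_upwards [eventually_mem_nhdsWithin] with K' hK'
    have hKK : K' - K ≠ 0 := sub_ne_zero.2 (by simpa using hK'.2)
    -- the exact identity for finite differences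
    have hid : S.y K' 0 / S.y K 0 - S.y K' a / S.y K a
        = (K' - K) * ∫ x in a..0, (∫ t in (-S.hm)..x, S.y K t * S.y K' t) / (S.y K x)^2 := by
      have hcontf : ContinuousOn (fun x => S.y K' x / S.y K x) (Icc a 0) :=
        ((S.conty K' hK'.1).mono hsubIcc).div ((S.conty K hK).mono hsubIcc) hyne_on
      have hderiv : ∀ x ∈ Ioo a (0:ℝ),
          HasDerivWithinAt (fun u => S.y K' u / S.y K u)
            ((K' - K) * ((∫ t in (-S.hm)..x, S.y K t * S.y K' t) / (S.y K x)^2)) (Ioi x) x := by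
        intro x hx
        have hxmem : x ∈ Icc (-S.hm) (0:ℝ) := hsubIcc (Ioo_subset_Icc_self hx)
        have hyx : S.y K x ≠ 0 := hyne_on x (Ioo_subset_Icc_self hx)
        have h := (S.hy K' hK'.1 hxmem).div (S.hy K hK hxmem) hyx
        have hW := S.wronskian K K' hK hK'.1 hxmem
        rw [hW] at h
        rw [mul_div_assoc] at h
        exact h.hasDerivWithinAt
      have hfint : IntervalIntegrable
          (fun x => (K' - K) * ((∫ t in (-S.hm)..x, S.y K t * S.y K' t) / (S.y K x)^2))
          volume a 0 := by
        apply ContinuousOn.intervalIntegrable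
        rw [uIcc_of_le ha.2.le]
        exact continuousOn_const.mul (((hcontP K' hK'.1).mono hsubIcc).div
          (((S.conty K hK).pow 2).mono hsubIcc)
          (fun x hx => pow_ne_zero 2 (hyne_on x hx)))
      have hftc := integral_eq_sub_of_hasDeriv_right_of_le ha.2.le hcontf hderiv hfint
      rw [intervalIntegral.integral_const_mul] at hftc
      rw [hftc]
    have e1 : (S.y K' 0 - S.y K 0)/(K' - K)/S.y K 0 - (S.y K' a - S.y K a)/(K' - K)/S.y K a
        = (S.y K' 0 / S.y K 0 - S.y K' a / S.y K a)/(K' - K) := by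
      field_simp
      ring
    rw [e1, hid, mul_comm, mul_div_assoc, div_self hKK, mul_one]
  have heq := tendsto_nhds_unique T1 T2
  rw [heq]
  exact hIpos

lemma int_pos (Q : ℝ) (hQ0 : 0 ≤ Q) (hQ : ∀ x ∈ Icc (-S.hm) (0:ℝ), |S.q x| ≤ Q)
    (K : ℝ) (hK : K ∈ Ici (0:ℝ)) :
    0 < ∫ x in (-S.hm)..0,
        S.y K x ^ 2 / S.y K 0 ^ 2 * (S.z K 0 / S.y K 0 - S.z K x / S.y K x) := by
  have hne0 : S.y K 0 ≠ 0 := (S.y0pos K hK).ne'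
  have hpt : ∀ x, S.y K x ^ 2 / S.y K 0 ^ 2 * (S.z K 0 / S.y K 0 - S.z K x / S.y K x)
      = (S.z K 0 / (S.y K 0)^3) * (S.y K x)^2 - (1/(S.y K 0)^2) * (S.y K x * S.z K x) := by
    intro x
    by_cases hyx : S.y K x = 0
    · simp [hyx]
    · field_simp
  apply intervalIntegral_pos_of_pos_on
  · have hfe : (fun x => S.y K x ^ 2 / S.y K 0 ^ 2 * (S.z K 0 / S.y K 0 - S.z K x / S.y K x))
        = fun x => (S.z K 0 / (S.y K 0)^3) * (S.y K x)^2
            - (1/(S.y K 0)^2) * (S.y K x * S.z K x) := funext hpt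
    rw [hfe]
    exact ((S.int_sq K hK).const_mul _).sub ((S.int_yz Q hQ0 hQ K hK).const_mul _)
  · intro x hx
    apply mul_pos
    · exact div_pos (pow_pos (S.ypos K hK x ⟨hx.1, hx.2.le⟩) 2) (pow_pos (S.y0pos K hK) 2)
    · exact S.ratio_pos Q hQ0 hQ K hK x hx
  · linarith [S.hhm]

lemma strict_concave (Q : ℝ) (hQ0 : 0 ≤ Q) (hQ : ∀ x ∈ Icc (-S.hm) (0:ℝ), |S.q x| ≤ Q) :
    StrictConcaveOn ℝ (Ici (0:ℝ)) (fun K => S.y' K 0 / S.y K 0) := by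
  apply strictConcaveOn_of_deriv2_neg (convex_Ici 0)
  · exact fun K hK => (S.hasDeriv_G Q hQ0 hQ K hK).continuousWithinAt
  · intro K hKi
    rw [interior_Ici] at hKi
    have hK : K ∈ Ici (0:ℝ) := mem_Ici.2 (le_of_lt hKi)
    have hd1 : ∀ K'' ∈ Ioi (0:ℝ), HasDerivAt (fun K' => S.y' K' 0 / S.y K' 0) (S.Gp K'') K'' :=
      fun K'' h => (S.hasDeriv_G Q hQ0 hQ K'' (mem_Ici.2 (le_of_lt h))).hasDerivAt (Ici_mem_nhds h)
    have hev : deriv (fun K' => S.y' K' 0 / S.y K' 0) =ᶠ[𝓝 K] S.Gp := by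
      filter_upwards [Ioi_mem_nhds hKi] with t ht
      exact (hd1 t ht).deriv
    have hd2 : HasDerivAt S.Gp (S.Gpp K) K :=
      (S.hasDeriv_Gp Q hQ0 hQ K hK).hasDerivAt (Ici_mem_nhds hKi)
    have hit : deriv^[2] (fun K' => S.y' K' 0 / S.y K' 0) K
        = deriv (deriv (fun K' => S.y' K' 0 / S.y K' 0)) K := by
      rw [Function.iterate_succ_apply', Function.iterate_one]
    rw [hit, hev.deriv_eq, hd2.deriv, ← S.neg_two_int_eq Q hQ0 hQ K hK]
    have := S.int_pos Q hQ0 hQ K hK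
    linarith

end Setup

end ConcavityAux


/-- Strict concavity in `K = k²` of `G(K) = Y⁻(c, √K)` for the lower fundamental
solution, with the explicit formula for the second derivative. -/
theorem concavity_Y_minus_in_K
    (hm : ℝ) (hhm : 0 < hm)
    (Um Um' Um'' : ℝ → ℝ)
    (hUm : ∀ x ∈ Icc (-hm) (0:ℝ), HasDerivAt Um (Um' x) x)
    (hUm' : ∀ x ∈ Icc (-hm) (0:ℝ), HasDerivAt Um' (Um'' x) x)
    (hUmc : ContinuousOn Um'' (Icc (-hm) (0:ℝ)))
    (c : ℝ) (hc : ∀ x ∈ Icc (-hm) (0:ℝ), Um x ≠ c)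
    (y y' y'' : ℝ → ℝ → ℝ)
    (hsol : ∀ K ∈ Ici (0:ℝ),
      (∀ x ∈ Icc (-hm) (0:ℝ),
        HasDerivAt (y K) (y' K x) x ∧ HasDerivAt (y' K) (y'' K x) x ∧
        -y'' K x + (K + Um'' x / (Um x - c)) * y K x = 0) ∧
      y K (-hm) = 0 ∧ y' K (-hm) = 1)
    (z : ℝ → ℝ → ℝ)
    (hz : ∀ K ∈ Ici (0:ℝ), ∀ x ∈ Icc (-hm) (0:ℝ),
      HasDerivWithinAt (fun K' => y K' x) (z K x) (Ici 0) K) :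
    ∃ G' : ℝ → ℝ,
      (∀ K ∈ Ici (0:ℝ),
        HasDerivWithinAt (fun K' => y' K' 0 / y K' 0) (G' K) (Ici 0) K ∧
        HasDerivWithinAt G'
          (-2 * ∫ x in (-hm)..0,
            y K x ^ 2 / y K 0 ^ 2 * (z K 0 / y K 0 - z K x / y K x))
          (Ici 0) K ∧
        -2 * (∫ x in (-hm)..0,
            y K x ^ 2 / y K 0 ^ 2 * (z K 0 / y K 0 - z K x / y K x)) < 0) ∧
      StrictConcaveOn ℝ (Ici 0) (fun K => y' K 0 / y K 0) := by
  let S : ConcavityAux.Setup :=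
    ⟨hm, hhm, Um, Um', Um'', hUm, hUm', hUmc, c, hc, y, y', y'', hsol, z, hz⟩
  obtain ⟨Q, hQ0, hQ⟩ := S.exists_qbound
  refine ⟨S.Gp, fun K hK => ⟨?_, ?_, ?_⟩, ?_⟩
  · exact S.hasDeriv_G Q hQ0 hQ K hK
  · show HasDerivWithinAt S.Gp
      (-2 * ∫ x in (-S.hm)..0,
        S.y K x ^ 2 / S.y K 0 ^ 2 * (S.z K 0 / S.y K 0 - S.z K x / S.y K x)) (Ici 0) K
    rw [S.neg_two_int_eq Q hQ0 hQ K hK]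
    exact S.hasDeriv_Gp Q hQ0 hQ K hK
  · show -2 * (∫ x in (-S.hm)..0,
        S.y K x ^ 2 / S.y K 0 ^ 2 * (S.z K 0 / S.y K 0 - S.z K x / S.y K x)) < 0
    have := S.int_pos Q hQ0 hQ K hK
    linarith
  · exact S.strict_concave Q hQ0 hQ
end

section
/- Let h₋ > 0, U⁻ ∈ C²([−h₋, 0]; ℝ), k ∈ ℝ, and c ∈ ℝ \ U⁻([−h₋, 0]). Let y⁻(c, k, ·) be the unique solution on [−h₋, 0] of the Rayleigh equation −y'' + (k² + (U⁻)''/(U⁻ − c)) y = 0 with y(−h₋) = 0, y'(−h₋) = 1. Then y⁻(c, k, x) > 0 for all x ∈ (−h₋, 0]. -/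
open Set MeasureTheory intervalIntegral Filter

/-- Positivity of the lower fundamental solution `y⁻(c, k, ·)` on `(-h₋, 0]`
for real `c` outside the range of `U⁻`. -/
theorem y_minus_pos
    (hm : ℝ) (hhm : 0 < hm)
    (Um Um' Um'' : ℝ → ℝ)
    (hUm : ∀ x ∈ Icc (-hm) (0:ℝ), HasDerivAt Um (Um' x) x)
    (hUm' : ∀ x ∈ Icc (-hm) (0:ℝ), HasDerivAt Um' (Um'' x) x)
    (hUmc : ContinuousOn Um'' (Icc (-hm) (0:ℝ)))
    (k : ℝ) (c : ℝ) (hc : ∀ x ∈ Icc (-hm) (0:ℝ), Um x ≠ c)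
    (y y' y'' : ℝ → ℝ)
    (hy : ∀ x ∈ Icc (-hm) (0:ℝ),
      HasDerivAt y (y' x) x ∧ HasDerivAt y' (y'' x) x ∧
      -y'' x + (k ^ 2 + Um'' x / (Um x - c)) * y x = 0)
    (hb0 : y (-hm) = 0) (hb1 : y' (-hm) = 1) :
    ∀ x ∈ Ioc (-hm) (0:ℝ), 0 < y x := by
  have hmem0 : (-hm) ∈ Icc (-hm) (0:ℝ) := ⟨le_refl _, by linarith⟩
  -- continuity of Um - c on Icc
  have hUcont : ContinuousOn (fun t => Um t - c) (Icc (-hm) 0) := fun x hx =>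
    ((hUm x hx).continuousAt.continuousWithinAt).sub continuousWithinAt_const
  -- Um - c has constant sign on Icc
  have hsame : ∀ x ∈ Icc (-hm) (0:ℝ), 0 < (Um x - c) * (Um (-hm) - c) := by
    intro x hx
    by_contra hle
    push_neg at hle
    have hsub : uIcc (-hm) x ⊆ Icc (-hm) 0 := by
      rw [uIcc_of_le hx.1]; exact Icc_subset_Icc le_rfl hx.2
    have h0 : (0:ℝ) ∈ uIcc ((fun t => Um t - c) (-hm)) ((fun t => Um t - c) x) := by
      rcases mul_nonpos_iff.mp hle with ⟨h1, h2⟩ | ⟨h1, h2⟩ <;>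
        simp only [mem_uIcc] <;>
        [ exact Or.inl ⟨by linarith, by linarith⟩;
          exact Or.inr ⟨by linarith, by linarith⟩ ]
    obtain ⟨z, hz, hz0⟩ := intermediate_value_uIcc (hUcont.mono hsub) h0
    exact hc z (hsub hz) (by linarith [sub_eq_zero.mp hz0])
  set s : ℝ := if 0 < Um (-hm) - c then 1 else -1 with hs
  have hψ : ∀ x ∈ Icc (-hm) (0:ℝ), 0 < s * (Um x - c) := by
    intro x hx
    have h := hsame x hx
    by_cases hp : 0 < Um (-hm) - c
    · rw [hs, if_pos hp]; nlinarith
    · rw [hs, if_neg hp]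
      have hne : Um (-hm) - c ≠ 0 := sub_ne_zero.mpr (hc (-hm) hmem0)
      have : Um (-hm) - c < 0 := lt_of_le_of_ne (not_lt.mp hp) hne
      nlinarith
  -- the Wronskian
  set W : ℝ → ℝ := fun x => s * (Um x - c) * y' x - y x * (s * Um' x) with hWdef
  have hW : ∀ x ∈ Icc (-hm) (0:ℝ),
      HasDerivAt W (k ^ 2 * (s * (Um x - c)) * y x) x := by
    intro x hx
    obtain ⟨hy1, hy2, heq⟩ := hy x hx
    have hU1 := hUm x hx
    have hU2 := hUm' x hx
    have hψd : HasDerivAt (fun t => s * (Um t - c)) (s * Um' x) x :=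
      ((hU1.sub_const c).const_mul s)
    have hψ'd : HasDerivAt (fun t => s * Um' t) (s * Um'' x) x := hU2.const_mul s
    have h1 := hψd.mul hy2
    have h2 := hy1.mul hψ'd
    have hWd := h1.sub h2
    refine hWd.congr_deriv ?_
    have hne : Um x - c ≠ 0 := sub_ne_zero.mpr (hc x hx)
    have hy2eq : y'' x = (k ^ 2 + Um'' x / (Um x - c)) * y x := by linarith
    rw [hy2eq]
    field_simp
    ring
  -- continuity of y, W on Icc
  have hWcont : ContinuousOn W (Icc (-hm) 0) := fun x hx =>
    ((hW x hx).continuousAt).continuousWithinAt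
  -- positivity just right of -hm
  have hd : HasDerivAt y 1 (-hm) := hb1 ▸ (hy (-hm) hmem0).1
  have htend : Tendsto (slope y (-hm)) (nhdsWithin (-hm) (Ioi (-hm))) (nhds 1) :=
    (hasDerivAt_iff_tendsto_slope.mp hd).mono_left
      (nhdsWithin_mono _ (fun z hz => ne_of_gt hz))
  have hev : ∀ᶠ z in nhdsWithin (-hm) (Ioi (-hm)), 0 < slope y (-hm) z :=
    htend.eventually (eventually_gt_nhds one_pos)
  obtain ⟨u, hu, huIoc⟩ := mem_nhdsGT_iff_exists_Ioc_subset.mp hev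
  have hposnear : ∀ z ∈ Ioc (-hm) u, 0 < y z := by
    intro z hz
    have hsl : 0 < slope y (-hm) z := huIoc hz
    have hzgt : (0:ℝ) < z - (-hm) := by linarith [hz.1]
    rw [slope_def_field, hb0, sub_zero] at hsl
    rcases div_pos_iff.mp hsl with h | h
    · exact h.1
    · linarith [h.2]
  -- main contradiction argument
  by_contra hcon
  push_neg at hcon
  obtain ⟨x0, hx0, hx0le⟩ := hcon
  set B : Set ℝ := {x : ℝ | x ∈ Ioc (-hm) (0:ℝ) ∧ y x ≤ 0} with hB
  have hBne : B.Nonempty := ⟨x0, hx0, hx0le⟩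
  have hBbd : BddBelow B := ⟨-hm, fun z hz => le_of_lt hz.1.1⟩
  set a : ℝ := sInf B with ha
  have hlbB : ∀ z ∈ B, u ≤ z := by
    intro z hz
    by_contra hzu
    push_neg at hzu
    exact absurd (hposnear z ⟨hz.1.1, le_of_lt hzu⟩) (not_lt.mpr hz.2)
  have hau : u ≤ a := le_csInf hBne hlbB
  have haL : -hm < a := lt_of_lt_of_le hu hau
  have haR : a ≤ 0 := le_trans (csInf_le hBbd ⟨hx0, hx0le⟩) hx0.2
  have haIcc : a ∈ Icc (-hm) (0:ℝ) := ⟨le_of_lt haL, haR⟩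
  -- y is positive strictly between -hm and a
  have hpos_mid : ∀ x ∈ Ioo (-hm) a, 0 < y x := by
    intro x hx
    by_contra hle
    push_neg at hle
    have : x ∈ B := ⟨⟨hx.1, le_trans (le_of_lt hx.2) haR⟩, hle⟩
    exact absurd (csInf_le hBbd this) (not_le.mpr hx.2)
  have hyca : ContinuousAt y a := (hy a haIcc).1.continuousAt
  -- y a ≤ 0
  have hya_le : y a ≤ 0 := by
    have hacl : a ∈ closure B := csInf_mem_closure hBne hBbd
    obtain ⟨v, hvB, hvt⟩ := mem_closure_iff_seq_limit.mp hacl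
    exact le_of_tendsto (hyca.tendsto.comp hvt) (Eventually.of_forall fun n => (hvB n).2)
  -- y a ≥ 0
  have hya_ge : 0 ≤ y a := by
    have hne : (nhdsWithin a (Iio a)).NeBot := ⟨by
      intro h; exact absurd h (nhdsWithin_Iio_self_neBot' ⟨-hm, haL⟩).ne'⟩
    have : ∀ᶠ z in nhdsWithin a (Iio a), 0 ≤ y z := by
      filter_upwards [Ioo_mem_nhdsLT haL] with z hz
      exact le_of_lt (hpos_mid z hz)
    exact ge_of_tendsto (hyca.continuousWithinAt.tendsto) this
  have hya : y a = 0 := le_antisymm hya_le hya_ge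
  -- y ≥ 0 on Icc (-hm) a
  have hynn : ∀ x ∈ Icc (-hm) a, 0 ≤ y x := by
    intro x hx
    rcases eq_or_lt_of_le hx.1 with h1 | h1
    · rw [← h1, hb0]
    rcases eq_or_lt_of_le hx.2 with h2 | h2
    · rw [h2, hya]
    exact le_of_lt (hpos_mid x ⟨h1, h2⟩)
  -- y' a ≤ 0
  have hy'a : y' a ≤ 0 := by
    have hdA : HasDerivAt y (y' a) a := (hy a haIcc).1
    have hne : (nhdsWithin a (Iio a)).NeBot := ⟨by
      intro h; exact absurd h (nhdsWithin_Iio_self_neBot' ⟨-hm, haL⟩).ne'⟩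
    have htendA : Tendsto (slope y a) (nhdsWithin a (Iio a)) (nhds (y' a)) :=
      (hasDerivAt_iff_tendsto_slope.mp hdA).mono_left
        (nhdsWithin_mono _ (fun z hz => ne_of_lt hz))
    have hevA : ∀ᶠ z in nhdsWithin a (Iio a), slope y a z ≤ 0 := by
      filter_upwards [Ioo_mem_nhdsLT haL] with z hz
      rw [slope_def_field, hya, sub_zero]
      exact div_nonpos_of_nonneg_of_nonpos (le_of_lt (hpos_mid z hz)) (by linarith [hz.2])
    exact le_of_tendsto htendA hevA
  -- W is monotone on Icc (-hm) a
  have hsubIcc : Icc (-hm) a ⊆ Icc (-hm) (0:ℝ) := Icc_subset_Icc le_rfl haR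
  have hWmono : MonotoneOn W (Icc (-hm) a) := by
    apply monotoneOn_of_deriv_nonneg (convex_Icc _ _) (hWcont.mono hsubIcc)
    · intro x hx
      rw [interior_Icc] at hx
      exact (hW x (hsubIcc ⟨le_of_lt hx.1, le_of_lt hx.2⟩)).differentiableAt.differentiableWithinAt
    · intro x hx
      rw [interior_Icc] at hx
      have hxI : x ∈ Icc (-hm) a := ⟨le_of_lt hx.1, le_of_lt hx.2⟩
      rw [(hW x (hsubIcc hxI)).deriv]
      have h1 : 0 < s * (Um x - c) := hψ x (hsubIcc hxI)
      have h2 : 0 ≤ y x := hynn x hxI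
      positivity
  have hWle : W (-hm) ≤ W a :=
    hWmono ⟨le_rfl, le_of_lt haL⟩ ⟨le_of_lt haL, le_rfl⟩ (le_of_lt haL)
  have hWstart : W (-hm) = s * (Um (-hm) - c) := by
    simp [hWdef, hb0, hb1]
  have hWa : W a = s * (Um a - c) * y' a := by
    simp [hWdef, hya]
  have hψ0 : 0 < s * (Um (-hm) - c) := hψ (-hm) hmem0
  have hψa : 0 < s * (Um a - c) := hψ a haIcc
  nlinarith [hWle, hWstart, hWa]
end

section
/- Let h₊ > 0, U⁺ ∈ C²([0, h₊]; ℝ), k ∈ ℝ, and c ∈ ℝ \ U⁺([0, h₊]). Let y⁺(c, k, ·) be the unique solution on [0, h₊] of the Rayleigh equation −y'' + (k² + (U⁺)''/(U⁺ − c)) y = 0 with y(h₊) = 0, y'(h₊) = 1. Then y⁺(c, k, x) < 0 for all x ∈ [0, h₊). -/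
open Set MeasureTheory intervalIntegral

/-- Negativity of the upper fundamental solution `y⁺(c, k, ·)` on `[0, h₊)`
for real `c` outside the range of `U⁺`. -/
theorem y_plus_neg
    (hp : ℝ) (hhp : 0 < hp)
    (Up Up' Up'' : ℝ → ℝ)
    (hUp : ∀ x ∈ Icc (0:ℝ) hp, HasDerivAt Up (Up' x) x)
    (hUp' : ∀ x ∈ Icc (0:ℝ) hp, HasDerivAt Up' (Up'' x) x)
    (hUpc : ContinuousOn Up'' (Icc (0:ℝ) hp))
    (k : ℝ) (c : ℝ) (hc : ∀ x ∈ Icc (0:ℝ) hp, Up x ≠ c)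
    (y y' y'' : ℝ → ℝ)
    (hy : ∀ x ∈ Icc (0:ℝ) hp,
      HasDerivAt y (y' x) x ∧ HasDerivAt y' (y'' x) x ∧
      -y'' x + (k ^ 2 + Up'' x / (Up x - c)) * y x = 0)
    (hb0 : y hp = 0) (hb1 : y' hp = 1) :
    ∀ x ∈ Ico (0:ℝ) hp, y x < 0 := by
  set d : ℝ → ℝ := fun x => Up x - c with hd
  have hdne : ∀ x ∈ Icc (0:ℝ) hp, d x ≠ 0 := fun x hx => sub_ne_zero.mpr (hc x hx)
  have hhpmem : hp ∈ Icc (0:ℝ) hp := ⟨hhp.le, le_rfl⟩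
  -- Step A: for any a < hp there is t ∈ (a, hp) with y t < 0
  have stepA : ∀ a < hp, ∃ t, a < t ∧ t < hp ∧ y t < 0 := by
    intro a ha
    have hder : HasDerivAt y 1 hp := hb1 ▸ (hy hp hhpmem).1
    have hslope : Filter.Tendsto (slope y hp) (nhdsWithin hp {hp}ᶜ) (nhds 1) :=
      hasDerivAt_iff_tendsto_slope.mp hder
    have hslope' : Filter.Tendsto (slope y hp) (nhdsWithin hp (Iio hp)) (nhds 1) :=
      hslope.mono_left (nhdsWithin_mono _ (fun t ht => ne_of_lt ht))
    have hev : ∀ᶠ t in nhdsWithin hp (Iio hp), 0 < slope y hp t :=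
      hslope'.eventually (eventually_gt_nhds one_pos)
    have hmem : Ioo a hp ∈ nhdsWithin hp (Iio hp) := Ioo_mem_nhdsLT_of_mem ⟨ha, le_rfl⟩
    obtain ⟨t, ht1, ht2⟩ := (hev.and (Filter.eventually_of_mem hmem (fun _ h => h))).exists
    refine ⟨t, ht2.1, ht2.2, ?_⟩
    rw [slope_def_field, hb0, sub_zero] at ht1
    rcases div_pos_iff.mp ht1 with ⟨h1, h2⟩ | ⟨h1, h2⟩
    · exfalso; have := ht2.2; linarith [sub_pos.mp h2]
    · exact h1
  -- F = y y' - y² Up'/d is monotone (its derivative is k²y² + (y' - y Up'/d)² ≥ 0)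
  set F : ℝ → ℝ := fun x => y x * y' x - (y x)^2 * Up' x / d x with hF
  have hFderiv : ∀ x ∈ Icc (0:ℝ) hp, HasDerivAt F
      (k^2 * (y x)^2 + (y' x - y x * Up' x / d x)^2) x := by
    intro x hx
    obtain ⟨hy1, hy2, hode⟩ := hy x hx
    have hdx : d x ≠ 0 := hdne x hx
    have hdd : HasDerivAt d (Up' x) x := (hUp x hx).sub_const c
    have h1 : HasDerivAt (fun x => y x * y' x) (y' x * y' x + y x * y'' x) x := hy1.mul hy2
    have h2 : HasDerivAt (fun x => (y x)^2 * Up' x)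
        (2 * y x * y' x * Up' x + (y x)^2 * Up'' x) x := by
      have := ((hy1.pow 2).mul (hUp' x hx))
      refine this.congr_deriv ?_
      push_cast [Pi.pow_apply]
      ring
    have h3 : HasDerivAt (fun x => (y x)^2 * Up' x / d x)
        (((2 * y x * y' x * Up' x + (y x)^2 * Up'' x) * d x - (y x)^2 * Up' x * Up' x) / (d x)^2)
        x := h2.div hdd hdx
    have h4 := h1.sub h3
    refine h4.congr_deriv (Eq.symm ?_)
    have h5 : y'' x = (k ^ 2 + Up'' x / (Up x - c)) * y x := by linarith
    rw [h5]
    have hdx' : Up x - c ≠ 0 := hdx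
    simp only [hd]
    field_simp
    ring
  have hFcont : ContinuousOn F (Icc (0:ℝ) hp) := by
    intro x hx
    obtain ⟨hy1, hy2, _⟩ := hy x hx
    have hdd : HasDerivAt d (Up' x) x := (hUp x hx).sub_const c
    exact ((hy1.continuousAt.mul hy2.continuousAt).sub
      (((hy1.continuousAt.pow 2).mul (hUp' x hx).continuousAt).div
        hdd.continuousAt (hdne x hx))).continuousWithinAt
  have hint : interior (Icc (0:ℝ) hp) = Ioo (0:ℝ) hp := interior_Icc
  have hFmono : MonotoneOn F (Icc (0:ℝ) hp) := by
    apply monotoneOn_of_hasDerivWithinAt_nonneg (convex_Icc _ _) hFcont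
    · intro x hx
      rw [hint] at hx
      exact ((hFderiv x (Ioo_subset_Icc_self hx)).hasDerivWithinAt)
    · intro x _
      positivity
  have hFle : ∀ x ∈ Icc (0:ℝ) hp, F x ≤ 0 := by
    intro x hx
    have h := hFmono hx hhpmem hx.2
    have : F hp = 0 := by simp [hF, hb0]
    linarith
  -- g = (y/d)² is antitone
  set g : ℝ → ℝ := fun x => (y x)^2 / (d x)^2 with hg
  have hganti : AntitoneOn g (Icc (0:ℝ) hp) := by
    apply antitoneOn_of_hasDerivWithinAt_nonpos (convex_Icc _ _)
    · intro x hx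
      obtain ⟨hy1, _, _⟩ := hy x hx
      have hdd : HasDerivAt d (Up' x) x := (hUp x hx).sub_const c
      exact ((hy1.continuousAt.pow 2).div (hdd.continuousAt.pow 2)
        (pow_ne_zero 2 (hdne x hx))).continuousWithinAt
    · intro x hx
      rw [hint] at hx
      have hx' := Ioo_subset_Icc_self hx
      obtain ⟨hy1, _, _⟩ := hy x hx'
      have hdd : HasDerivAt d (Up' x) x := (hUp x hx').sub_const c
      exact (((hy1.pow 2).div (hdd.pow 2) (pow_ne_zero 2 (hdne x hx')))).hasDerivWithinAt
    · intro x hx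
      rw [hint] at hx
      have hx' := Ioo_subset_Icc_self hx
      have hFx : y x * y' x - (y x)^2 * Up' x / d x ≤ 0 := hFle x hx'
      have hdx : d x ≠ 0 := hdne x hx'
      have h2d : (0:ℝ) < (d x)^2 := by positivity
      apply div_nonpos_of_nonpos_of_nonneg _ (by positivity)
      have key : (y x * y' x - (y x)^2 * Up' x / d x) * (d x)^2 ≤ 0 :=
        mul_nonpos_of_nonpos_of_nonneg hFx h2d.le
      have key2 : (y x * y' x - (y x)^2 * Up' x / d x) * (d x)^2
          = 2⁻¹ * (2 * y x * y' x * (d x)^2 - (y x)^2 * (2 * d x * Up' x)) := by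
        field_simp
      have key3 : 2⁻¹ * (2 * y x * y' x * (d x)^2 - (y x)^2 * (2 * d x * Up' x)) ≤ 0 := by
        rw [← key2]; exact key
      clear_value d F g
      push_cast
      simp only [pow_one, Pi.pow_apply]
      linarith
  -- y never vanishes on [0, hp)
  have hne : ∀ x ∈ Ico (0:ℝ) hp, y x ≠ 0 := by
    intro x hx h0
    obtain ⟨t, ht1, ht2, ht3⟩ := stepA x hx.2
    have htmem : t ∈ Icc (0:ℝ) hp := ⟨(hx.1.trans_lt ht1).le, ht2.le⟩
    have hgt : g t ≤ g x := hganti ⟨hx.1, hx.2.le⟩ htmem ht1.le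
    have hgx : g x = 0 := by simp [hg, h0]
    have hdt : d t ≠ 0 := hdne t htmem
    have hyt : y t ≠ 0 := ht3.ne
    have hgtpos : 0 < g t := by
      simp only [hg]
      positivity
    linarith
  intro x hx
  rcases lt_trichotomy (y x) 0 with h | h | h
  · exact h
  · exact absurd h (hne x hx)
  · exfalso
    obtain ⟨t, ht1, ht2, ht3⟩ := stepA x hx.2
    have hcont : ContinuousOn y (Icc x t) := fun s hs =>
      ((hy s ⟨hx.1.trans hs.1, hs.2.trans ht2.le⟩).1).continuousAt.continuousWithinAt
    have h0 : (0:ℝ) ∈ Icc (y t) (y x) := ⟨ht3.le, h.le⟩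
    obtain ⟨z, hz, hz0⟩ := intermediate_value_Icc' ht1.le hcont h0
    exact hne z ⟨hx.1.trans hz.1, hz.2.trans_lt ht2⟩ hz0
end

section
/- Let h₋ > 0, U⁻ ∈ C²([−h₋, 0]; ℝ), and c ∈ ℝ \ U⁻([−h₋, 0]). Let y⁻(c, 0, ·) be the unique solution on [−h₋, 0] of −y'' + ((U⁻)''/(U⁻ − c)) y = 0 with y(−h₋) = 0, y'(−h₋) = 1. Then y⁻(c, 0, 0) ≠ 0 and Y⁻(c, 0) := (y⁻)'(c, 0, 0)/y⁻(c, 0, 0) = (U⁻)'(0)/(U⁻(0) − c) + 1 / ( (U⁻(0) − c)² ∫_{−h₋}^{0} (U⁻(x) − c)^{−2} dx ). -/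
open Set MeasureTheory intervalIntegral

/-- Explicit formula for `Y⁻(c, 0)` at zero wave number for real `c` off the range
of `U⁻`. -/
theorem Y_minus_k_zero_formula
    (hm : ℝ) (hhm : 0 < hm)
    (Um Um' Um'' : ℝ → ℝ)
    (hUm : ∀ x ∈ Icc (-hm) (0:ℝ), HasDerivAt Um (Um' x) x)
    (hUm' : ∀ x ∈ Icc (-hm) (0:ℝ), HasDerivAt Um' (Um'' x) x)
    (hUmc : ContinuousOn Um'' (Icc (-hm) (0:ℝ)))
    (c : ℝ) (hc : ∀ x ∈ Icc (-hm) (0:ℝ), Um x ≠ c)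
    (y y' y'' : ℝ → ℝ)
    (hy : ∀ x ∈ Icc (-hm) (0:ℝ),
      HasDerivAt y (y' x) x ∧ HasDerivAt y' (y'' x) x ∧
      -y'' x + (Um'' x / (Um x - c)) * y x = 0)
    (hb0 : y (-hm) = 0) (hb1 : y' (-hm) = 1) :
    y 0 ≠ 0 ∧
    y' 0 / y 0 = Um' 0 / (Um 0 - c)
      + 1 / ((Um 0 - c) ^ 2 * ∫ x in (-hm)..0, ((Um x - c) ^ 2)⁻¹) := by
  have hmem0 : (0:ℝ) ∈ Icc (-hm) (0:ℝ) := ⟨by linarith, le_refl _⟩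
  have hmemh : (-hm) ∈ Icc (-hm) (0:ℝ) := ⟨le_refl _, by linarith⟩
  have hle : (-hm) ≤ (0:ℝ) := by linarith
  have hne : ∀ x ∈ Icc (-hm) (0:ℝ), Um x - c ≠ 0 := fun x hx =>
    sub_ne_zero.mpr (hc x hx)
  set Wf : ℝ → ℝ := fun x => y' x * (Um x - c) - y x * Um' x with hWf
  -- W has zero derivative
  have hW : ∀ x ∈ Icc (-hm) (0:ℝ), HasDerivAt Wf 0 x := by
    intro x hx
    obtain ⟨hy1, hy2, heq⟩ := hy x hx
    have hUc : HasDerivAt (fun t => Um t - c) (Um' x) x := (hUm x hx).sub_const c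
    have hD := (hy2.mul hUc).sub (hy1.mul (hUm' x hx))
    have hnex := hne x hx
    have h3 : y'' x * (Um x - c) = Um'' x * y x := by
      field_simp at heq; linarith
    refine hD.congr_deriv ?_
    ring_nf
    nlinarith [h3]
  have hWcont : ContinuousOn Wf (Icc (-hm) (0:ℝ)) := fun x hx =>
    (hW x hx).continuousAt.continuousWithinAt
  have hWconst : ∀ x ∈ Icc (-hm) (0:ℝ), Wf x = Wf (-hm) :=
    constant_of_has_deriv_right_zero hWcont
      (fun x hx => (hW x (Ico_subset_Icc_self hx)).hasDerivWithinAt)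
  have hWA : Wf (-hm) = Um (-hm) - c := by simp [hWf, hb0, hb1]
  have hWAne : Um (-hm) - c ≠ 0 := hne _ hmemh
  -- g = y / (U - c)
  have hg : ∀ x ∈ Icc (-hm) (0:ℝ),
      HasDerivAt (fun t => y t / (Um t - c)) ((Um (-hm) - c) / (Um x - c) ^ 2) x := by
    intro x hx
    obtain ⟨hy1, _, _⟩ := hy x hx
    have hUc : HasDerivAt (fun t => Um t - c) (Um' x) x := (hUm x hx).sub_const c
    have hD := hy1.div hUc (hne x hx)
    have : y' x * (Um x - c) - y x * Um' x = Um (-hm) - c := by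
      have := hWconst x hx; rw [hWA] at this; exact this
    rwa [this] at hD
  have hUcont : ContinuousOn Um (Icc (-hm) (0:ℝ)) := fun x hx =>
    (hUm x hx).continuousAt.continuousWithinAt
  have hicont : ContinuousOn (fun x => ((Um x - c) ^ 2)⁻¹) (Icc (-hm) (0:ℝ)) := by
    apply ContinuousOn.inv₀
    · exact ((hUcont.sub continuousOn_const).pow 2)
    · intro x hx; exact pow_ne_zero 2 (hne x hx)
  have hint : IntervalIntegrable (fun x => ((Um x - c) ^ 2)⁻¹) volume (-hm) 0 := by
    apply ContinuousOn.intervalIntegrable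
    rwa [uIcc_of_le hle]
  have hint2 : IntervalIntegrable (fun x => (Um (-hm) - c) / (Um x - c) ^ 2)
      volume (-hm) 0 := by
    simp only [div_eq_mul_inv]
    exact (hint.const_mul _)
  have hFTC : (∫ x in (-hm)..0, (Um (-hm) - c) / (Um x - c) ^ 2)
      = y 0 / (Um 0 - c) - y (-hm) / (Um (-hm) - c) := by
    have := intervalIntegral.integral_eq_sub_of_hasDerivAt
      (f := fun t => y t / (Um t - c))
      (f' := fun x => (Um (-hm) - c) / (Um x - c) ^ 2)
      (fun x hx => hg x (by rwa [uIcc_of_le hle] at hx)) hint2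
    simpa using this
  set I : ℝ := ∫ x in (-hm)..0, ((Um x - c) ^ 2)⁻¹ with hI
  have hInt : (Um (-hm) - c) * I = y 0 / (Um 0 - c) := by
    have : (∫ x in (-hm)..0, (Um (-hm) - c) / (Um x - c) ^ 2)
        = (Um (-hm) - c) * I := by
      simp only [div_eq_mul_inv, hI]
      exact intervalIntegral.integral_const_mul _ _
    rw [this, hb0] at hFTC
    simpa using hFTC
  have hIpos : 0 < I := by
    apply intervalIntegral.intervalIntegral_pos_of_pos_on hint
    · intro x hx
      have hx' : x ∈ Icc (-hm) (0:ℝ) := ⟨le_of_lt hx.1, le_of_lt hx.2⟩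
      have := hne x hx'
      positivity
    · linarith
  have hU0ne : Um 0 - c ≠ 0 := hne _ hmem0
  have hy0 : y 0 = (Um (-hm) - c) * I * (Um 0 - c) := by
    field_simp at hInt ⊢; linarith
  have hy0ne : y 0 ≠ 0 := by
    rw [hy0]
    exact mul_ne_zero (mul_ne_zero hWAne (ne_of_gt hIpos)) hU0ne
  refine ⟨hy0ne, ?_⟩
  -- y' 0 from the Wronskian at 0
  have hW0 : y' 0 * (Um 0 - c) - y 0 * Um' 0 = Um (-hm) - c := by
    have := hWconst 0 hmem0; rw [hWA] at this; exact this
  have hIne : I ≠ 0 := ne_of_gt hIpos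
  have hy'0 : y' 0 = ((Um (-hm) - c) + y 0 * Um' 0) / (Um 0 - c) := by
    field_simp
    linarith [hW0]
  rw [hy'0, hy0]
  field_simp
  ring
end
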